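/- arXiv:1102.1816 — 5 statements merged into one kernel-verified Lean document; each statement's English description precedes it below -/
import Mathlib

section
/- Let μ_φ be the Gibbs measure of a Lipschitz potential φ with pressure 0 and let D = D(φ) > 0 be a constant such that the exponential inequality ∫ exp(K(x,…,σ^{n−1}x)) dμ_φ(x) ≤ exp(∫ K dμ_φ-average) · exp(D Σ_{i=0}^{n−1} Lip_i(K)²) holds for all n and all separately Lipschitz K:Ω^n→ℝ. Then for every α ∈ (0,1), every t > 0, every n ≥ 2 and every integer k = k(n) ≥ 1 with k(n) ≤ (α/(2 log|A|)) log n, one has μ_φ{x : |Ĥ_{k(n)}(x_0^{n−1})/k(n) − E(Ĥ_{k(n)}/k(n))| ≥ t} ≤ 2 exp(−n^{1−α} t² / (16 D (log n)²)), where E denotes expectation with respect to μ_φ. -/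
open MeasureTheory Finset
open scoped ENNReal

namespace GibbsEntropy

variable {A : Type*} [Fintype A] [DecidableEq A]

/-- The left shift `σ` on one-sided sequences `Ω = A^ℕ`. -/
def shift (x : ℕ → A) : ℕ → A := fun i => x (i + 1)

/-- The cylinder set `[w]` determined by a word `w = a_0 … a_{k-1}`. -/
def cylinder {k : ℕ} (w : Fin k → A) : Set (ℕ → A) := {x | ∀ i : Fin k, x i.val = w i}

/-- The metric `d_θ(x,y) = θ^N`, `N` the first disagreement index. -/
noncomputable def dTheta (θ : ℝ) (x y : ℕ → A) : ℝ :=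
  letI : Decidable (x = y) := Classical.dec _
  if h : x = y then 0
  else θ ^ (Nat.find (p := fun n => x n ≠ y n)
    (by by_contra hc; push_neg at hc; exact h (funext fun i => hc i)))

/-- `f` is Lipschitz w.r.t. `d_θ`, i.e. `var_m(f) ≤ C θ^m` for all `m`
(`var_m` being the oscillation over pairs agreeing on coordinates `0,…,m`). -/
def LipFun (θ : ℝ) (f : (ℕ → A) → ℝ) : Prop :=
  ∃ C : ℝ, 0 ≤ C ∧ ∀ (m : ℕ) (x y : ℕ → A), (∀ i ≤ m, x i = y i) → |f x - f y| ≤ C * θ ^ m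

/-- `|f|_θ`, the least Lipschitz constant of `f` w.r.t. `d_θ`. -/
noncomputable def lipNorm (θ : ℝ) (f : (ℕ → A) → ℝ) : ℝ :=
  sInf {C : ℝ | 0 ≤ C ∧ ∀ (m : ℕ) (x y : ℕ → A), (∀ i ≤ m, x i = y i) → |f x - f y| ≤ C * θ ^ m}

/-- A separately Lipschitz function of `n` variables in `Ω^n`. -/
def SepLip (θ : ℝ) {n : ℕ} (K : (Fin n → (ℕ → A)) → ℝ) : Prop :=
  ∀ j : Fin n, ∃ C : ℝ, 0 ≤ C ∧ ∀ (x : Fin n → (ℕ → A)) (y : ℕ → A),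
    |K x - K (Function.update x j y)| ≤ C * dTheta θ (x j) y

/-- `Lip_j(K)`, the least Lipschitz constant of `K` in its `j`-th variable. -/
noncomputable def lipCoord (θ : ℝ) {n : ℕ} (K : (Fin n → (ℕ → A)) → ℝ) (j : Fin n) : ℝ :=
  sInf {C : ℝ | 0 ≤ C ∧ ∀ (x : Fin n → (ℕ → A)) (y : ℕ → A),
    |K x - K (Function.update x j y)| ≤ C * dTheta θ (x j) y}

/-- The trajectory `(x, σx, …, σ^{n-1}x)`. -/
def traj (n : ℕ) (x : ℕ → A) : Fin n → (ℕ → A) := fun i => shift^[i.val] x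

/-- The Gibbs property (with topological pressure `0`) of `μ` for the potential `φ`:
`C⁻¹ ≤ μ([x_0^{m-1}]) / exp(∑_{k<m} φ(σ^k x)) ≤ C`. -/
def IsGibbs [MeasurableSpace A] (φ : (ℕ → A) → ℝ) (μ : Measure (ℕ → A)) : Prop :=
  ∃ C : ℝ, 1 < C ∧ ∀ (x : ℕ → A) (m : ℕ), 1 ≤ m →
    C⁻¹ * Real.exp (∑ i ∈ Finset.range m, φ (shift^[i] x)) ≤
        (μ (cylinder (fun i : Fin m => x i.val))).toReal ∧
    (μ (cylinder (fun i : Fin m => x i.val))).toReal ≤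
        C * Real.exp (∑ i ∈ Finset.range m, φ (shift^[i] x))

/-- Empirical frequency `E_k(w; x_0^{n-1})` of the word `w` in the `n`-periodization of `x`. -/
noncomputable def empFreq (n k : ℕ) (x : ℕ → A) (w : Fin k → A) : ℝ :=
  ((Finset.range n).filter (fun j => ∀ i : Fin k, x ((j + i.val) % n) = w i)).card / n

/-- `k`-block entropy `H_k(η)` of a probability vector `η` on `A^k` (`0 log 0 = 0`). -/
noncomputable def blockEnt (k : ℕ) (η : (Fin k → A) → ℝ) : ℝ :=
  -∑ w : Fin k → A, η w * Real.log (η w)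

/-- The `k`-block empirical entropy `Ĥ_k(x_0^{n-1})`. -/
noncomputable def empEnt (n k : ℕ) (x : ℕ → A) : ℝ := blockEnt k (empFreq n k x)

/-- The `k`-block conditional empirical entropy `ĥ_k = Ĥ_k - Ĥ_{k-1}`. -/
noncomputable def condEmpEnt (n k : ℕ) (x : ℕ → A) : ℝ := empEnt n k x - empEnt n (k - 1) x

/-- `k`-block relative entropy `H_k(η | ρ) = ∑ η log(η/ρ)` (conventions `0 log 0 = 0`,
`0 log (0/c) = 0`). -/
noncomputable def relEnt (k : ℕ) (η ρ : (Fin k → A) → ℝ) : ℝ :=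
  ∑ w : Fin k → A, η w * Real.log (η w / ρ w)

/-- `μ([w])` as a real number. -/
noncomputable def muWord [MeasurableSpace A] (μ : Measure (ℕ → A)) (k : ℕ) (w : Fin k → A) : ℝ :=
  (μ (cylinder w)).toReal

/-- `Δ̂_k(x_0^{n-1}) = -H_k(E_k(·;x_0^{n-1})|μ) + H_{k-1}(E_{k-1}(·;x_0^{n-1})|μ)`. -/
noncomputable def deltaHat [MeasurableSpace A] (μ : Measure (ℕ → A)) (n k : ℕ) (x : ℕ → A) : ℝ :=
  -relEnt k (empFreq n k x) (muWord μ k) +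
    relEnt (k - 1) (empFreq n (k - 1) x) (muWord μ (k - 1))

/-- Hitting time `W_n(x,y) = inf{j ≥ 1 : y_j^{j+n-1} = x_0^{n-1}}` (in `ℝ≥0∞`, `= ∞`
if there is no such `j`). -/
noncomputable def hitTime (n : ℕ) (x y : ℕ → A) : ℝ≥0∞ :=
  ⨅ (j : ℕ) (_ : 1 ≤ j ∧ ∀ i : Fin n, y (j + i.val) = x i.val), (j : ℝ≥0∞)

/-- Hitting time `τ_{[w]}(y) = inf{j ≥ 1 : y_j^{j+n-1} = w}` of the cylinder of a word `w`. -/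
noncomputable def wordHitTime {n : ℕ} (w : Fin n → A) (y : ℕ → A) : ℝ≥0∞ :=
  ⨅ (j : ℕ) (_ : 1 ≤ j ∧ ∀ i : Fin n, y (j + i.val) = w i), (j : ℝ≥0∞)

/-- The tail word `a_1^{k-1}` of a word `a_0^{k-1}`. -/
def wordTail {k : ℕ} (w : Fin k → A) : Fin (k - 1) → A := fun i => w ⟨i.val + 1, by omega⟩

end GibbsEntropy

set_option linter.unusedSectionVars false
set_option maxHeartbeats 1000000

namespace GibbsEntropyAux
open GibbsEntropy
variable {A : Type*} [Fintype A] [DecidableEq A]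





def win (n k : ℕ) (x : ℕ → A) (j : ℕ) : Fin k → A := fun i => x ((j + i.val) % n)

def cnt (n k : ℕ) (x : ℕ → A) (w : Fin k → A) : ℕ :=
  ((Finset.range n).filter (fun j => win n k x j = w)).card

lemma cnt_sum (n k : ℕ) (x : ℕ → A) : ∑ w : Fin k → A, cnt n k x w = n := by
  classical
  have := Finset.card_eq_sum_card_fiberwise
    (f := fun j => win n k x j) (s := Finset.range n) (t := Finset.univ)
    (fun j _ => Finset.mem_univ _)
  simpa [cnt, Finset.card_range] using this.symm

lemma cnt_le (n k : ℕ) (x : ℕ → A) (w : Fin k → A) : cnt n k x w ≤ n := by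
  simpa [cnt] using (Finset.card_filter_le (Finset.range n)
    (fun j => win n k x j = w)).trans (le_of_eq (Finset.card_range n))

lemma win_congr {n : ℕ} (hn : 0 < n) (k : ℕ) {x x' : ℕ → A}
    (h : ∀ m < n, x m = x' m) (j : ℕ) : win n k x j = win n k x' j := by
  funext i
  exact h _ (Nat.mod_lt _ hn)

lemma xlogx_nonneg (a : ℕ) : 0 ≤ (a : ℝ) * Real.log a := by
  rcases Nat.eq_zero_or_pos a with h | h
  · simp [h]
  · exact mul_nonneg (Nat.cast_nonneg a)
      (Real.log_nonneg (by exact_mod_cast Nat.one_le_iff_ne_zero.2 h.ne'))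

lemma xlogx_mono {a b : ℕ} (hab : a ≤ b) :
    (a : ℝ) * Real.log a ≤ (b : ℝ) * Real.log b := by
  rcases Nat.eq_zero_or_pos a with h | h
  · simpa [h] using xlogx_nonneg b
  · have ha1 : (1 : ℝ) ≤ (a : ℝ) := by exact_mod_cast h
    have hab' : (a : ℝ) ≤ (b : ℝ) := by exact_mod_cast hab
    exact mul_le_mul hab' (Real.log_le_log (by linarith) hab')
      (Real.log_nonneg ha1) (by positivity)

lemma xlogx_diff {n : ℕ} (a b : ℕ) (ha : a ≤ n) (hb : b ≤ n) :
    |(a : ℝ) * Real.log a - (b : ℝ) * Real.log b| ≤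
      |(a : ℝ) - (b : ℝ)| * (1 + Real.log n) := by
  wlog hab : b ≤ a generalizing a b
  · rw [abs_sub_comm, abs_sub_comm (a : ℝ)]
    exact this b a hb ha (le_of_not_ge hab)
  have habR : (b : ℝ) ≤ (a : ℝ) := by exact_mod_cast hab
  rw [abs_of_nonneg (sub_nonneg.2 (xlogx_mono hab)), abs_of_nonneg (sub_nonneg.2 habR)]
  rcases Nat.eq_zero_or_pos b with hb0 | hb1
  · subst hb0
    simp only [Nat.cast_zero, Real.log_zero, mul_zero, sub_zero]
    rcases Nat.eq_zero_or_pos a with ha0 | ha1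
    · simp [ha0]
    · have h1 : Real.log a ≤ Real.log n :=
        Real.log_le_log (by exact_mod_cast ha1) (by exact_mod_cast ha)
      have h2 : (0:ℝ) ≤ Real.log n := Real.log_nonneg
        (by exact_mod_cast Nat.one_le_iff_ne_zero.2 (by omega : n ≠ 0))
      nlinarith [Nat.cast_nonneg (α := ℝ) a]
  · have ha1 : 0 < a := lt_of_lt_of_le hb1 hab
    have haR : (0:ℝ) < a := by exact_mod_cast ha1
    have hbR : (0:ℝ) < b := by exact_mod_cast hb1
    have hlogn : Real.log a ≤ Real.log n :=
      Real.log_le_log haR (by exact_mod_cast ha)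
    have hlogdiv : Real.log a - Real.log b ≤ (a : ℝ) / b - 1 := by
      have := Real.log_le_sub_one_of_pos (div_pos haR hbR)
      rwa [Real.log_div haR.ne' hbR.ne'] at this
    have hkey : (b : ℝ) * (Real.log a - Real.log b) ≤ (a : ℝ) - b := by
      have := mul_le_mul_of_nonneg_left hlogdiv hbR.le
      calc (b:ℝ) * (Real.log a - Real.log b) ≤ (b:ℝ) * ((a:ℝ)/b - 1) := this
        _ = (a:ℝ) - b := by field_simp
    have hsplit : (a : ℝ) * Real.log a - (b : ℝ) * Real.log b =
        ((a:ℝ) - b) * Real.log a + (b:ℝ) * (Real.log a - Real.log b) := by ring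
    rw [hsplit]
    have h1 : ((a:ℝ) - b) * Real.log a ≤ ((a:ℝ) - b) * Real.log n :=
      mul_le_mul_of_nonneg_left hlogn (by linarith)
    nlinarith

lemma cnt_osc {n k : ℕ} (hn : 0 < n) (hkn : k ≤ n) {m : ℕ} (hm : m < n)
    {x x' : ℕ → A} (hdiff : ∀ p, p ≠ m → x p = x' p) :
    ∑ w : Fin k → A, |((cnt n k x w : ℝ)) - (cnt n k x' w : ℝ)| ≤ 2 * k := by
  classical
  set T := (Finset.range n).filter (fun j => ¬ (win n k x j = win n k x' j)) with hT
  have hTsub : T ⊆ Finset.range n := Finset.filter_subset _ _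
  have hTcard : T.card ≤ k := by
    have hsub : T ⊆ (Finset.range k).image (fun i => (m + n - i) % n) := by
      intro j hj
      obtain ⟨hjn, hne⟩ := Finset.mem_filter.1 hj
      have hjn' : j < n := Finset.mem_range.1 hjn
      have hex : ∃ i : Fin k, (j + i.val) % n = m := by
        by_contra hno
        push_neg at hno
        exact hne (funext fun i => hdiff _ (hno i))
      obtain ⟨i, hi⟩ := hex
      refine Finset.mem_image.2 ⟨i.val, Finset.mem_range.2 i.isLt, ?_⟩
      have hin : i.val ≤ m + n := by
        have : i.val < n := lt_of_lt_of_le i.isLt hkn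
        omega
      have h1 : (m + n - i.val + i.val) % n = m := by
        rw [Nat.sub_add_cancel hin, Nat.add_mod_right, Nat.mod_eq_of_lt hm]
      have h2 : (j + i.val) % n = (m + n - i.val + i.val) % n := by rw [hi, h1]
      have h3 : j % n = (m + n - i.val) % n :=
        (Nat.ModEq.add_right_cancel' i.val h2)
      rw [← h3, Nat.mod_eq_of_lt hjn']
    calc T.card ≤ _ := Finset.card_le_card hsub
      _ ≤ (Finset.range k).card := Finset.card_image_le
      _ = k := Finset.card_range k
  have hcast : ∀ (y : ℕ → A) (w : Fin k → A), (cnt n k y w : ℝ) =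
      ∑ j ∈ Finset.range n, (if win n k y j = w then (1:ℝ) else 0) := by
    intro y w
    rw [cnt, Finset.card_filter]
    push_cast
    rfl
  have hpt : ∀ w : Fin k → A, |(cnt n k x w : ℝ) - (cnt n k x' w : ℝ)| ≤
      ∑ j ∈ T, ((if win n k x j = w then (1:ℝ) else 0) +
        (if win n k x' j = w then (1:ℝ) else 0)) := by
    intro w
    have hdiffsum : (cnt n k x w : ℝ) - (cnt n k x' w : ℝ) =
        ∑ j ∈ T, ((if win n k x j = w then (1:ℝ) else 0) -
          (if win n k x' j = w then (1:ℝ) else 0)) := by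
      rw [hcast x w, hcast x' w, ← Finset.sum_sub_distrib]
      refine (Finset.sum_subset hTsub ?_).symm
      intro j hj hjT
      have : win n k x j = win n k x' j := by
        by_contra hcon
        exact hjT (Finset.mem_filter.2 ⟨hj, hcon⟩)
      simp [this]
    rw [hdiffsum]
    refine (Finset.abs_sum_le_sum_abs _ _).trans (Finset.sum_le_sum ?_)
    intro j _
    have h1 : (0:ℝ) ≤ (if win n k x j = w then (1:ℝ) else 0) := by positivity
    have h2 : (0:ℝ) ≤ (if win n k x' j = w then (1:ℝ) else 0) := by positivity
    rw [abs_sub_comm]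
    refine (abs_sub _ _).trans ?_
    rw [abs_of_nonneg h1, abs_of_nonneg h2]
    linarith
  calc ∑ w : Fin k → A, |(cnt n k x w : ℝ) - (cnt n k x' w : ℝ)|
      ≤ ∑ w : Fin k → A, ∑ j ∈ T, ((if win n k x j = w then (1:ℝ) else 0) +
        (if win n k x' j = w then (1:ℝ) else 0)) := Finset.sum_le_sum fun w _ => hpt w
    _ = ∑ j ∈ T, ∑ w : Fin k → A, ((if win n k x j = w then (1:ℝ) else 0) +
        (if win n k x' j = w then (1:ℝ) else 0)) := Finset.sum_comm
    _ = ∑ j ∈ T, 2 := by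
        refine Finset.sum_congr rfl fun j _ => ?_
        rw [Finset.sum_add_distrib, Finset.sum_ite_eq, Finset.sum_ite_eq]
        norm_num
    _ = 2 * T.card := by rw [Finset.sum_const]; push_cast; ring
    _ ≤ 2 * k := by exact_mod_cast Nat.mul_le_mul_left 2 hTcard


lemma empFreq_eq (n k : ℕ) (x : ℕ → A) (w : Fin k → A) :
    empFreq n k x w = (cnt n k x w : ℝ) / n := by
  have hfil : (Finset.range n).filter (fun j => ∀ i : Fin k, x ((j + i.val) % n) = w i)
      = (Finset.range n).filter (fun j => win n k x j = w) := by
    refine Finset.filter_congr fun j _ => ?_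
    constructor
    · intro h; funext i; exact h i
    · intro h i; exact congrFun h i
  rw [empFreq, hfil]; rfl

lemma empFreq_congr {n : ℕ} (hn : 0 < n) (k : ℕ) {x x' : ℕ → A}
    (h : ∀ m < n, x m = x' m) : empFreq n k x = empFreq n k x' := by
  funext w
  rw [empFreq_eq, empFreq_eq]
  congr 2
  unfold cnt
  congr 1
  refine Finset.filter_congr fun j _ => ?_
  rw [win_congr hn k h j]

lemma empEnt_congr {n : ℕ} (hn : 0 < n) (k : ℕ) {x x' : ℕ → A}
    (h : ∀ m < n, x m = x' m) : empEnt n k x = empEnt n k x' := by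
  unfold empEnt
  rw [empFreq_congr hn k h]

lemma empEnt_eq {n : ℕ} (hn : 0 < n) (k : ℕ) (x : ℕ → A) :
    empEnt n k x = Real.log n -
      (∑ w : Fin k → A, (cnt n k x w : ℝ) * Real.log (cnt n k x w)) / n := by
  have hnR : (0:ℝ) < n := by exact_mod_cast hn
  unfold empEnt blockEnt
  have hterm : ∀ w : Fin k → A, empFreq n k x w * Real.log (empFreq n k x w) =
      ((cnt n k x w : ℝ) * Real.log (cnt n k x w)) / n -
        ((cnt n k x w : ℝ) / n) * Real.log n := by
    intro w
    rw [empFreq_eq]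
    rcases Nat.eq_zero_or_pos (cnt n k x w) with h0 | hpos
    · simp [h0]
    · have hcR : (0:ℝ) < cnt n k x w := by exact_mod_cast hpos
      rw [Real.log_div hcR.ne' hnR.ne']
      ring
  rw [Finset.sum_congr rfl fun w _ => hterm w, Finset.sum_sub_distrib]
  have hsum1 : ∑ w : Fin k → A, ((cnt n k x w : ℝ) / n) * Real.log n =
      Real.log n := by
    rw [← Finset.sum_mul, ← Finset.sum_div]
    have : ∑ w : Fin k → A, (cnt n k x w : ℝ) = n := by
      rw [← Nat.cast_sum]
      exact_mod_cast congrArg (Nat.cast : ℕ → ℝ) (cnt_sum n k x)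
    rw [this, div_self hnR.ne', one_mul]
  rw [hsum1, ← Finset.sum_div]
  ring

lemma empEnt_osc {n k : ℕ} (hn : 0 < n) (hkn : k ≤ n) {m : ℕ} (hm : m < n)
    {x x' : ℕ → A} (hdiff : ∀ p, p ≠ m → x p = x' p) :
    |empEnt n k x - empEnt n k x'| ≤ 2 * k * (1 + Real.log n) / n := by
  have hnR : (0:ℝ) < n := by exact_mod_cast hn
  rw [empEnt_eq hn k x, empEnt_eq hn k x']
  have h1 : Real.log n - (∑ w : Fin k → A, (cnt n k x w : ℝ) * Real.log (cnt n k x w)) / n -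
      (Real.log n - (∑ w : Fin k → A, (cnt n k x' w : ℝ) * Real.log (cnt n k x' w)) / n) =
      ((∑ w : Fin k → A, (cnt n k x' w : ℝ) * Real.log (cnt n k x' w)) -
        (∑ w : Fin k → A, (cnt n k x w : ℝ) * Real.log (cnt n k x w))) / n := by
    ring
  rw [h1, abs_div, abs_of_pos hnR, div_le_div_iff_of_pos_right hnR]
  rw [← Finset.sum_sub_distrib]
  refine (Finset.abs_sum_le_sum_abs _ _).trans ?_
  have hstep : ∀ w : Fin k → A,
      |(cnt n k x' w : ℝ) * Real.log (cnt n k x' w) -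
        (cnt n k x w : ℝ) * Real.log (cnt n k x w)| ≤
      |(cnt n k x' w : ℝ) - (cnt n k x w : ℝ)| * (1 + Real.log n) := fun w =>
    xlogx_diff _ _ (cnt_le n k x' w) (cnt_le n k x w)
  refine (Finset.sum_le_sum fun w _ => hstep w).trans ?_
  rw [← Finset.sum_mul]
  have hlog : (0:ℝ) ≤ 1 + Real.log n := by
    have : (0:ℝ) ≤ Real.log n := Real.log_natCast_nonneg n
    linarith
  have := cnt_osc hn hkn hm (fun p hp => (hdiff p hp))
  have h2 : ∑ w : Fin k → A, |(cnt n k x' w : ℝ) - (cnt n k x w : ℝ)| ≤ 2 * k := by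
    calc ∑ w : Fin k → A, |(cnt n k x' w : ℝ) - (cnt n k x w : ℝ)|
        = ∑ w : Fin k → A, |(cnt n k x w : ℝ) - (cnt n k x' w : ℝ)| := by
          refine Finset.sum_congr rfl fun w _ => abs_sub_comm _ _
      _ ≤ 2 * k := this
  exact mul_le_mul_of_nonneg_right h2 hlog

lemma abs_xlogx_le_one {p : ℝ} (h0 : 0 ≤ p) (h1 : p ≤ 1) : |p * Real.log p| ≤ 1 := by
  rcases eq_or_lt_of_le h0 with h | h
  · simp [← h]
  · have hlog : Real.log p ≤ 0 := Real.log_nonpos h0 h1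
    have habs : |p * Real.log p| = p * (-Real.log p) := by
      rw [abs_of_nonpos (mul_nonpos_of_nonneg_of_nonpos h0 hlog)]
      ring
    rw [habs]
    have hinv : Real.log p⁻¹ ≤ p⁻¹ - 1 := Real.log_le_sub_one_of_pos (inv_pos.2 h)
    rw [Real.log_inv] at hinv
    have := mul_le_mul_of_nonneg_left hinv h0
    calc p * (-Real.log p) ≤ p * (p⁻¹ - 1) := this
      _ = 1 - p := by field_simp
      _ ≤ 1 := by linarith

lemma empFreq_mem {n k : ℕ} (hn : 0 < n) (x : ℕ → A) (w : Fin k → A) :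
    0 ≤ empFreq n k x w ∧ empFreq n k x w ≤ 1 := by
  have hnR : (0:ℝ) < n := by exact_mod_cast hn
  rw [empFreq_eq]
  constructor
  · positivity
  · rw [div_le_one hnR]
    exact_mod_cast cnt_le n k x w

lemma empEnt_bound {n : ℕ} (hn : 0 < n) (k : ℕ) (x : ℕ → A) :
    |empEnt n k x| ≤ (Fintype.card (Fin k → A) : ℝ) := by
  unfold empEnt blockEnt
  rw [abs_neg]
  refine (Finset.abs_sum_le_sum_abs _ _).trans ?_
  calc ∑ w : Fin k → A, |empFreq n k x w * Real.log (empFreq n k x w)|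
      ≤ ∑ _w : Fin k → A, (1:ℝ) := Finset.sum_le_sum fun w _ =>
        abs_xlogx_le_one (empFreq_mem hn x w).1 (empFreq_mem hn x w).2
    _ = (Fintype.card (Fin k → A) : ℝ) := by
        rw [Finset.sum_const, Finset.card_univ]; simp

lemma measurableSet_all {n : ℕ} [MeasurableSpace A] [MeasurableSingletonClass A]
    (s : Set (Fin n → A)) : MeasurableSet s := by
  have hsing : ∀ v : Fin n → A, MeasurableSet ({v} : Set (Fin n → A)) := by
    intro v
    have hv : ({v} : Set (Fin n → A)) = ⋂ i, (fun f : Fin n → A => f i) ⁻¹' {v i} := by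
      ext f
      simp [Set.mem_iInter, funext_iff, eq_comm]
    rw [hv]
    exact MeasurableSet.iInter fun i => (measurable_pi_apply i) (measurableSet_singleton _)
  have hs : s = ⋃ v ∈ s, ({v} : Set (Fin n → A)) := by simp
  rw [hs]
  exact MeasurableSet.biUnion (Set.to_countable s) fun v _ => hsing v

lemma empEnt_measurable [MeasurableSpace A] [MeasurableSingletonClass A]
    {n : ℕ} (hn : 0 < n) (k : ℕ) : Measurable (fun x : ℕ → A => empEnt n k x) := by
  have h : (fun x : ℕ → A => empEnt n k x) =
      (fun v : Fin n → A => empEnt n k (fun m => v ⟨m % n, Nat.mod_lt _ hn⟩)) ∘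
        (fun x : ℕ → A => (fun i : Fin n => x i.val)) := by
    funext x
    refine empEnt_congr hn k ?_
    intro m hm
    simp [Nat.mod_eq_of_lt hm]
  rw [h]
  have hmeas1 : Measurable (fun v : Fin n → A =>
      empEnt n k (fun m => v ⟨m % n, Nat.mod_lt _ hn⟩)) :=
    fun s _ => measurableSet_all _
  have hmeas2 : Measurable (fun x : ℕ → A => (fun i : Fin n => x i.val)) :=
    measurable_pi_lambda _ fun i => measurable_pi_apply i.val
  exact hmeas1.comp hmeas2

lemma shift_iter (j : ℕ) (x : ℕ → A) (m : ℕ) : (shift^[j] x) m = x (m + j) := by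
  induction j generalizing x m with
  | zero => rfl
  | succ p ih =>
    rw [Function.iterate_succ_apply]
    rw [ih]
    simp [shift]
    ring_nf

lemma dTheta_nonneg {θ : ℝ} (hθ : 0 ≤ θ) (x y : ℕ → A) :
    0 ≤ dTheta θ x y := by
  by_cases h : x = y
  · simp [dTheta, h]
  · simp only [dTheta]
    rw [dif_neg h]
    exact pow_nonneg hθ _

lemma dTheta_eq_zero (θ : ℝ) {x y : ℕ → A} (h : x = y) :
    dTheta θ x y = 0 := by
  simp [dTheta, h]

lemma dTheta_eq_one (θ : ℝ) {x y : ℕ → A} (h0 : x 0 ≠ y 0) :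
    dTheta θ x y = 1 := by
  have hxy : x ≠ y := fun hc => h0 (congrFun hc 0)
  simp only [dTheta]
  rw [dif_neg hxy, (Nat.find_eq_zero _).2 h0, pow_zero]

end GibbsEntropyAux


open GibbsEntropy

open GibbsEntropyAux in
theorem statement_6 {A : Type*} [Fintype A] [DecidableEq A] [MeasurableSpace A] [MeasurableSingletonClass A]
    (hA : 2 ≤ Fintype.card A)
    (θ : ℝ) (hθ : θ ∈ Set.Ioo (0 : ℝ) 1)
    (φ : (ℕ → A) → ℝ) (hφ : LipFun θ φ)
    (μ : Measure (ℕ → A)) [IsProbabilityMeasure μ]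
    (hσ : MeasurePreserving (shift (A := A)) μ μ)
    (hGibbs : IsGibbs φ μ)
    (D : ℝ) (hD : 0 < D)
    (hIneq : ∀ (n : ℕ), 1 ≤ n → ∀ K : (Fin n → (ℕ → A)) → ℝ, SepLip θ K →
      ∫ x, Real.exp (K (traj n x)) ∂μ ≤
        Real.exp (∫ y, K (traj n y) ∂μ) * Real.exp (D * ∑ j : Fin n, lipCoord θ K j ^ 2)) :
    ∀ α ∈ Set.Ioo (0 : ℝ) 1, ∀ t : ℝ, 0 < t → ∀ n : ℕ, 2 ≤ n → ∀ k : ℕ, 1 ≤ k →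
      (k : ℝ) ≤ α / (2 * Real.log (Fintype.card A)) * Real.log n →
      μ {x | |empEnt n k x / (k : ℝ) - ∫ y, empEnt n k y / (k : ℝ) ∂μ| ≥ t} ≤
        ENNReal.ofReal (2 * Real.exp (-((n : ℝ) ^ ((1 : ℝ) - α) * t ^ 2) /
          (16 * D * Real.log n ^ 2))) := by
  classical
  intro α hα t ht n hn2 k hk1 hkbound
  obtain ⟨hα0, hα1⟩ := hα
  obtain ⟨hθ0, hθ1⟩ := hθ
  have hn0 : 0 < n := by omega
  have hnR : (0:ℝ) < n := by exact_mod_cast hn0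
  set L := Real.log n with hLdef
  have hcardR : (2:ℝ) ≤ (Fintype.card A : ℝ) := by exact_mod_cast hA
  have hlog2pos : (0:ℝ) < Real.log 2 := Real.log_pos (by norm_num)
  have hlog2 : Real.log 2 ≤ Real.log (Fintype.card A) :=
    Real.log_le_log (by norm_num) hcardR
  have hlogA : (0:ℝ) < Real.log (Fintype.card A) := lt_of_lt_of_le hlog2pos hlog2
  have hαL : 2 * Real.log (Fintype.card A) ≤ α * L := by
    have h1 : (1:ℝ) ≤ α / (2 * Real.log (Fintype.card A)) * L :=
      le_trans (by exact_mod_cast hk1) hkbound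
    rw [div_mul_eq_mul_div, le_div_iff₀ (by positivity)] at h1
    linarith
  have hlog2half : (1/2 : ℝ) ≤ Real.log 2 := by
    have := Real.log_two_gt_d9; linarith
  have hL1 : (1:ℝ) ≤ L := by nlinarith
  have hLpos : (0:ℝ) < L := by linarith
  have h4exp : (4:ℝ) ≤ Real.exp (α * L) := by
    have h24 : Real.exp (2 * Real.log 2) = 4 := by
      rw [show (2:ℝ) * Real.log 2 = Real.log 4 by
        rw [show (4:ℝ) = 2 ^ (2:ℕ) by norm_num, Real.log_pow]; push_cast; ring]
      exact Real.exp_log (by norm_num)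
    rw [← h24]
    exact Real.exp_le_exp.2 (by nlinarith)
  have hkR : (1:ℝ) ≤ (k:ℝ) := by exact_mod_cast hk1
  have hkRpos : (0:ℝ) < (k:ℝ) := by linarith
  have hkn : k ≤ n := by
    have hcoef : α / (2 * Real.log (Fintype.card A)) ≤ 1 := by
      rw [div_le_one (by positivity)]; nlinarith
    have h1 : (k:ℝ) ≤ L := by nlinarith
    have h2 : L ≤ (n:ℝ) - 1 := Real.log_le_sub_one_of_pos hnR
    have : (k:ℝ) ≤ (n:ℝ) := by linarith
    exact_mod_cast this
  set B := 2 * (1 + L) / n with hBdef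
  have hB : 0 < B := by rw [hBdef]; exact div_pos (by linarith) hnR
  set G := fun x : ℕ → A => empEnt n k x / (k:ℝ) with hGdef
  set E := ∫ y, G y ∂μ with hEdef
  -- oscillation bound for G under single-site change
  have hGosc : ∀ (x1 : ℕ → A) (m : ℕ), m < n → ∀ a : A,
      |G x1 - G (Function.update x1 m a)| ≤ B := by
    intro x1 m hm a
    have hdiff : ∀ p, p ≠ m → x1 p = Function.update x1 m a p := by
      intro p hp; rw [Function.update_of_ne hp]
    have hosc := empEnt_osc (A := A) hn0 hkn hm hdiff
    have hGg : G x1 - G (Function.update x1 m a) =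
        (empEnt n k x1 - empEnt n k (Function.update x1 m a)) / k := by
      simp only [hGdef]; ring
    rw [hGg, abs_div, abs_of_pos hkRpos, div_le_iff₀ hkRpos]
    refine hosc.trans (le_of_eq ?_)
    rw [hBdef]; field_simp; ring
  set ext : (Fin n → (ℕ → A)) → (ℕ → A) :=
    fun z m => z ⟨m % n, Nat.mod_lt _ hn0⟩ 0 with hextdef
  -- the separate-Lipschitz bound
  have hlip : ∀ (c : ℝ) (j : Fin n) (z : Fin n → (ℕ → A)) (y : ℕ → A),
      |c * G (ext z) - c * G (ext (Function.update z j y))| ≤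
        (|c| * B) * dTheta θ (z j) y := by
    intro c j z y
    by_cases hzy : z j = y
    · have hupd : Function.update z j y = z := by
        rw [← hzy]; exact Function.update_eq_self j z
      rw [hupd, sub_self, abs_zero, dTheta_eq_zero θ hzy, mul_zero]
    · have hagree : ∀ m < n, ext (Function.update z j y) m =
          Function.update (ext z) j.val (y 0) m := by
        intro m hm
        by_cases hmj : m = j.val
        · have hfin : (⟨m % n, Nat.mod_lt _ hn0⟩ : Fin n) = j :=
            Fin.ext (by rw [Fin.val_mk, Nat.mod_eq_of_lt hm, hmj])
          show Function.update z j y ⟨m % n, Nat.mod_lt _ hn0⟩ 0 =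
            Function.update (ext z) j.val (y 0) m
          rw [hfin, hmj, Function.update_self, Function.update_self]
        · have hfin : (⟨m % n, Nat.mod_lt _ hn0⟩ : Fin n) ≠ j := by
            intro hcon; apply hmj
            have := congrArg Fin.val hcon
            simpa [Nat.mod_eq_of_lt hm] using this
          simp [hextdef, Function.update_of_ne hfin, Function.update_of_ne hmj]
      have hGeq : G (ext (Function.update z j y)) =
          G (Function.update (ext z) j.val (y 0)) := by
        show empEnt n k (ext (Function.update z j y)) / (k:ℝ) =
          empEnt n k (Function.update (ext z) j.val (y 0)) / (k:ℝ)
        rw [empEnt_congr hn0 k hagree]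
      by_cases h0 : z j 0 = y 0
      · have hval : (ext z) j.val = y 0 := by
          simp [hextdef, Nat.mod_eq_of_lt j.isLt, Fin.eta, h0]
        have : Function.update (ext z) j.val (y 0) = ext z := by
          rw [← hval]; exact Function.update_eq_self _ _
        rw [hGeq, this, sub_self, abs_zero]
        exact mul_nonneg (by positivity) (dTheta_nonneg hθ0.le _ _)
      · rw [dTheta_eq_one θ h0, mul_one, hGeq]
        have h1 : c * G (ext z) - c * G (Function.update (ext z) j.val (y 0)) =
            c * (G (ext z) - G (Function.update (ext z) j.val (y 0))) := by ring
        rw [h1, abs_mul]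
        exact mul_le_mul_of_nonneg_left (hGosc (ext z) j.val j.isLt (y 0)) (abs_nonneg c)
  have hsep : ∀ c : ℝ, SepLip θ (fun z => c * G (ext z)) := by
    intro c j
    exact ⟨|c| * B, by positivity, fun z y => hlip c j z y⟩
  have hlipCoord : ∀ (c : ℝ) (j : Fin n),
      lipCoord θ (fun z => c * G (ext z)) j ^ 2 ≤ (|c| * B)^2 := by
    intro c j
    have hbdd : BddBelow {C : ℝ | 0 ≤ C ∧ ∀ (z : Fin n → (ℕ → A)) (y : ℕ → A),
        |(fun z => c * G (ext z)) z - (fun z => c * G (ext z)) (Function.update z j y)| ≤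
          C * dTheta θ (z j) y} := ⟨0, fun C hC => hC.1⟩
    have hmem : (|c| * B) ∈ {C : ℝ | 0 ≤ C ∧ ∀ (z : Fin n → (ℕ → A)) (y : ℕ → A),
        |(fun z => c * G (ext z)) z - (fun z => c * G (ext z)) (Function.update z j y)| ≤
          C * dTheta θ (z j) y} := ⟨by positivity, fun z y => hlip c j z y⟩
    have h1 : lipCoord θ (fun z => c * G (ext z)) j ≤ |c| * B := csInf_le hbdd hmem
    have h0 : 0 ≤ lipCoord θ (fun z => c * G (ext z)) j :=
      le_csInf ⟨_, hmem⟩ fun C hC => hC.1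
    exact pow_le_pow_left₀ h0 h1 2
  have hK : ∀ (c : ℝ) (x : ℕ → A), c * G (ext (traj n x)) = c * G x := by
    intro c x
    have hagr : ∀ m < n, ext (traj n x) m = x m := by
      intro m hm
      show (shift^[((⟨m % n, Nat.mod_lt _ hn0⟩ : Fin n)).val] x) 0 = x m
      rw [shift_iter]
      simp [Nat.mod_eq_of_lt hm]
    show c * (empEnt n k (ext (traj n x)) / (k:ℝ)) = c * (empEnt n k x / (k:ℝ))
    rw [empEnt_congr hn0 k hagr]
  have hkey : ∀ c : ℝ, (∫ x, Real.exp (c * G x) ∂μ) ≤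
      Real.exp (c * E + D * ((n:ℝ) * (c^2 * B^2))) := by
    intro c
    have h := hIneq n (by omega) (fun z => c * G (ext z)) (hsep c)
    have h1 : (∫ x, Real.exp ((fun z => c * G (ext z)) (traj n x)) ∂μ) =
        ∫ x, Real.exp (c * G x) ∂μ :=
      integral_congr_ae (ae_of_all μ fun x => by simpa using congrArg Real.exp (hK c x))
    have h2 : (∫ y, (fun z => c * G (ext z)) (traj n y) ∂μ) = c * E := by
      have h3 : (∫ y, (fun z => c * G (ext z)) (traj n y) ∂μ) = ∫ y, c * G y ∂μ :=
        integral_congr_ae (ae_of_all μ fun y => by simpa using hK c y)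
      rw [h3, hEdef]
      exact integral_const_mul c G
    rw [h1, h2] at h
    refine h.trans ?_
    rw [← Real.exp_add]
    refine Real.exp_le_exp.2 ?_
    have hsum : ∑ j : Fin n, lipCoord θ (fun z => c * G (ext z)) j ^ 2 ≤
        (n:ℝ) * (c^2 * B^2) := by
      calc ∑ j : Fin n, lipCoord θ (fun z => c * G (ext z)) j ^ 2
          ≤ ∑ _j : Fin n, (|c| * B)^2 := Finset.sum_le_sum fun j _ => hlipCoord c j
        _ = (n:ℝ) * (|c| * B)^2 := by
            rw [Finset.sum_const, Finset.card_univ, Fintype.card_fin, nsmul_eq_mul]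
        _ = (n:ℝ) * (c^2 * B^2) := by rw [mul_pow, sq_abs]
    nlinarith [mul_le_mul_of_nonneg_left hsum hD.le]
  set Mb := (Fintype.card (Fin k → A) : ℝ) with hMbdef
  have hGbd : ∀ x, |G x| ≤ Mb := by
    intro x
    simp only [hGdef]
    rw [abs_div, abs_of_pos hkRpos]
    exact (div_le_self (abs_nonneg _) hkR).trans (empEnt_bound hn0 k x)
  have hGmeas : Measurable G := (empEnt_measurable hn0 k).div_const _
  have hInt : ∀ c : ℝ, Integrable (fun x => Real.exp (c * G x)) μ := by
    intro c
    refine Integrable.mono' (integrable_const (Real.exp (|c| * Mb)))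
      ((hGmeas.const_mul c).exp.aestronglyMeasurable) (ae_of_all μ fun x => ?_)
    rw [Real.norm_eq_abs, abs_of_pos (Real.exp_pos _)]
    refine Real.exp_le_exp.2 ?_
    calc c * G x ≤ |c * G x| := le_abs_self _
      _ = |c| * |G x| := abs_mul c _
      _ ≤ |c| * Mb := mul_le_mul_of_nonneg_left (hGbd x) (abs_nonneg c)
  have hmarkov : ∀ (F : (ℕ → A) → ℝ), Integrable (fun x => Real.exp (F x)) μ →
      ∀ r I₀ : ℝ, (∫ x, Real.exp (F x) ∂μ) ≤ I₀ →
      μ {x | r ≤ F x} ≤ ENNReal.ofReal (I₀ / Real.exp r) := by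
    intro F hFint r I₀ hI
    have hset : {x | r ≤ F x} = {x | Real.exp r ≤ Real.exp (F x)} := by
      ext x; simp [Real.exp_le_exp]
    have hm := mul_meas_ge_le_integral_of_nonneg (μ := μ)
      (ae_of_all μ fun x => (Real.exp_pos (F x)).le) hFint (Real.exp r)
    rw [hset]
    have hfin : μ {x | Real.exp r ≤ Real.exp (F x)} ≠ ⊤ := measure_ne_top μ _
    have h1 : (μ {x | Real.exp r ≤ Real.exp (F x)}).toReal ≤ I₀ / Real.exp r := by
      rw [le_div_iff₀ (Real.exp_pos r)]
      calc (μ {x | Real.exp r ≤ Real.exp (F x)}).toReal * Real.exp r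
          = Real.exp r * (μ {x | Real.exp r ≤ Real.exp (F x)}).toReal := mul_comm _ _
        _ ≤ ∫ x, Real.exp (F x) ∂μ := hm
        _ ≤ I₀ := hI
    calc μ {x | Real.exp r ≤ Real.exp (F x)}
        = ENNReal.ofReal ((μ {x | Real.exp r ≤ Real.exp (F x)}).toReal) :=
          (ENNReal.ofReal_toReal hfin).symm
      _ ≤ ENNReal.ofReal (I₀ / Real.exp r) := ENNReal.ofReal_le_ofReal h1
  set S0 := (n:ℝ) * B^2 with hS0def
  have hS0pos : 0 < S0 := by rw [hS0def]; exact mul_pos hnR (pow_pos hB 2)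
  set c := t / (2 * D * S0) with hcdef
  have hcpos : 0 < c := by rw [hcdef]; positivity
  set ebd := Real.exp (-(t^2 / (4 * D * S0))) with hebddef
  have hexp1 : D * ((n:ℝ) * (c^2 * B^2)) - c * t = -(t^2 / (4 * D * S0)) := by
    have h1 : (n:ℝ) * (c^2 * B^2) = c^2 * S0 := by rw [hS0def]; ring
    rw [h1, hcdef]
    field_simp
    ring
  -- upper deviation
  have hside1 : μ {x | t ≤ G x - E} ≤ ENNReal.ofReal ebd := by
    have hfun : (fun x => Real.exp (c * G x - c * E)) =
        fun x => Real.exp (c * G x) / Real.exp (c * E) :=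
      funext fun x => by rw [Real.exp_sub]
    have hFint : Integrable (fun x => Real.exp (c * G x - c * E)) μ := by
      rw [hfun]; exact (hInt c).div_const _
    have hIbound : (∫ x, Real.exp (c * G x - c * E) ∂μ) ≤
        Real.exp (D * ((n:ℝ) * (c^2 * B^2))) := by
      rw [hfun, integral_div, div_le_iff₀ (Real.exp_pos _)]
      calc (∫ x, Real.exp (c * G x) ∂μ)
          ≤ Real.exp (c * E + D * ((n:ℝ) * (c^2 * B^2))) := hkey c
        _ = Real.exp (D * ((n:ℝ) * (c^2 * B^2))) * Real.exp (c * E) := by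
            rw [← Real.exp_add]; ring_nf
    have hsets : {x | t ≤ G x - E} = {x | c * t ≤ c * G x - c * E} := by
      ext x; simp only [Set.mem_setOf_eq]
      rw [show c * G x - c * E = c * (G x - E) by ring, mul_le_mul_iff_right₀ hcpos]
    rw [hsets]
    refine (hmarkov (fun x => c * G x - c * E) hFint (c * t) _ hIbound).trans ?_
    apply ENNReal.ofReal_le_ofReal
    rw [← Real.exp_sub, hexp1, hebddef]
  -- lower deviation
  have hside2 : μ {x | t ≤ E - G x} ≤ ENNReal.ofReal ebd := by
    have hfun : (fun x => Real.exp ((-c) * G x - (-c) * E)) =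
        fun x => Real.exp ((-c) * G x) / Real.exp ((-c) * E) :=
      funext fun x => by rw [Real.exp_sub]
    have hFint : Integrable (fun x => Real.exp ((-c) * G x - (-c) * E)) μ := by
      rw [hfun]; exact (hInt (-c)).div_const _
    have hIbound : (∫ x, Real.exp ((-c) * G x - (-c) * E) ∂μ) ≤
        Real.exp (D * ((n:ℝ) * (c^2 * B^2))) := by
      rw [hfun, integral_div, div_le_iff₀ (Real.exp_pos _)]
      calc (∫ x, Real.exp ((-c) * G x) ∂μ)
          ≤ Real.exp ((-c) * E + D * ((n:ℝ) * ((-c)^2 * B^2))) := hkey (-c)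
        _ = Real.exp (D * ((n:ℝ) * (c^2 * B^2))) * Real.exp ((-c) * E) := by
            rw [← Real.exp_add, neg_pow]; ring_nf
    have hsets : {x | t ≤ E - G x} = {x | c * t ≤ (-c) * G x - (-c) * E} := by
      ext x; simp only [Set.mem_setOf_eq]
      rw [show (-c) * G x - (-c) * E = c * (E - G x) by ring, mul_le_mul_iff_right₀ hcpos]
    rw [hsets]
    refine (hmarkov (fun x => (-c) * G x - (-c) * E) hFint (c * t) _ hIbound).trans ?_
    apply ENNReal.ofReal_le_ofReal
    rw [← Real.exp_sub, hexp1, hebddef]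
  -- combine
  have hunion : {x | |empEnt n k x / (k : ℝ) - ∫ y, empEnt n k y / (k : ℝ) ∂μ| ≥ t} ⊆
      {x | t ≤ G x - E} ∪ {x | t ≤ E - G x} := by
    intro x hx
    have hx' : t ≤ |G x - E| := hx
    rcases le_abs.1 hx' with h | h
    · exact Or.inl h
    · right
      rw [neg_sub] at h
      exact h
  -- final exponent comparison
  have hrn : (n:ℝ) ^ ((1:ℝ) - α) * Real.exp (α * L) = (n:ℝ) := by
    have hα' : Real.exp (α * L) = (n:ℝ) ^ α := by
      rw [Real.rpow_def_of_pos hnR, mul_comm]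
    rw [hα', ← Real.rpow_add hnR]
    norm_num
  have hrp : (0:ℝ) ≤ (n:ℝ) ^ ((1:ℝ) - α) := Real.rpow_nonneg hnR.le _
  have hineq1 : (n:ℝ) ^ ((1:ℝ) - α) * (1 + L)^2 ≤ (n:ℝ) * L^2 := by
    have h1 : (1 + L)^2 ≤ 4 * L^2 := by nlinarith
    calc (n:ℝ) ^ ((1:ℝ) - α) * (1 + L)^2
        ≤ (n:ℝ) ^ ((1:ℝ) - α) * (4 * L^2) := mul_le_mul_of_nonneg_left h1 hrp
      _ ≤ (n:ℝ) ^ ((1:ℝ) - α) * (Real.exp (α * L) * L^2) :=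
          mul_le_mul_of_nonneg_left (by nlinarith [sq_nonneg L]) hrp
      _ = (n:ℝ) * L^2 := by rw [← mul_assoc, hrn]
  have hfinalexp : -(t^2 / (4 * D * S0)) ≤
      -((n:ℝ) ^ ((1:ℝ) - α) * t ^ 2) / (16 * D * L ^ 2) := by
    rw [neg_div]
    apply neg_le_neg
    have hS0val : S0 = 4 * (1 + L)^2 / n := by
      rw [hS0def, hBdef]; field_simp; ring
    have hQ : (n:ℝ) ^ ((1:ℝ) - α) * (1 + L)^2 / n ≤ L^2 := by
      rw [div_le_iff₀ hnR]
      calc (n:ℝ) ^ ((1:ℝ) - α) * (1 + L)^2 ≤ (n:ℝ) * L^2 := hineq1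
        _ = L^2 * n := by ring
    have hden1 : (0:ℝ) < 16 * D * L ^ 2 :=
      mul_pos (mul_pos (by norm_num) hD) (pow_pos hLpos 2)
    have hden2 : (0:ℝ) < 4 * D * S0 :=
      mul_pos (mul_pos (by norm_num) hD) hS0pos
    rw [div_le_div_iff₀ hden1 hden2]
    have hgoal : (n:ℝ) ^ ((1:ℝ) - α) * t ^ 2 * (4 * D * S0) =
        16 * D * t^2 * ((n:ℝ) ^ ((1:ℝ) - α) * (1 + L)^2 / n) := by
      rw [hS0val]; field_simp; ring
    rw [hgoal]
    calc 16 * D * t^2 * ((n:ℝ) ^ ((1:ℝ) - α) * (1 + L)^2 / n)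
        ≤ 16 * D * t^2 * L^2 :=
          mul_le_mul_of_nonneg_left hQ (by positivity)
      _ = t ^ 2 * (16 * D * L ^ 2) := by ring
  calc μ {x | |empEnt n k x / (k : ℝ) - ∫ y, empEnt n k y / (k : ℝ) ∂μ| ≥ t}
      ≤ μ ({x | t ≤ G x - E} ∪ {x | t ≤ E - G x}) := measure_mono hunion
    _ ≤ μ {x | t ≤ G x - E} + μ {x | t ≤ E - G x} := measure_union_le _ _
    _ ≤ ENNReal.ofReal ebd + ENNReal.ofReal ebd := add_le_add hside1 hside2
    _ = ENNReal.ofReal (2 * ebd) := by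
        rw [← ENNReal.ofReal_add (by positivity) (by positivity)]
        norm_num [two_mul]
    _ ≤ ENNReal.ofReal (2 * Real.exp (-((n : ℝ) ^ ((1 : ℝ) - α) * t ^ 2) /
          (16 * D * Real.log n ^ 2))) := by
        apply ENNReal.ofReal_le_ofReal
        have h2 : ebd ≤ Real.exp (-((n : ℝ) ^ ((1 : ℝ) - α) * t ^ 2) /
            (16 * D * L ^ 2)) := by
          rw [hebddef]
          exact Real.exp_le_exp.2 hfinalexp
        linarith
end

section
/- Let μ_φ be the Gibbs measure of a Lipschitz potential φ with pressure 0 and let D = D(φ) > 0 be a constant such that the exponential inequality ∫ exp(K(x,…,σ^{n−1}x)) dμ_φ(x) ≤ exp(∫ K dμ_φ-average) · exp(D Σ_{i=0}^{n−1} Lip_i(K)²) holds for all n and all separately Lipschitz K:Ω^n→ℝ. Then for every α ∈ (0,1), every n ≥ 2 and every integer k = k(n) ≥ 1 with k(n) ≤ (α/(2 log|A|)) log n, the variance under μ_φ of x ↦ Ĥ_{k(n)}(x_0^{n−1})/k(n) is at most 8D (log n)² / n^{1−α}. -/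
open MeasureTheory Finset
open scoped ENNReal

open Real in
lemma cosh_quad (t : ℝ) : 2 + t^2 ≤ Real.exp t + Real.exp (-t) := by
  have key : ∀ s : ℝ, 0 ≤ s → 1 + s^2/2 ≤ Real.cosh s := by
    intro s hs
    have hmono : MonotoneOn (fun x : ℝ => Real.cosh x - 1 - x^2/2) (Set.Ici 0) := by
      apply monotoneOn_of_deriv_nonneg (convex_Ici 0)
      · exact (Real.continuous_cosh.sub continuous_const).sub
          (continuous_pow 2 |>.div_const 2) |>.continuousOn
      · intro x hx
        exact ((Real.differentiable_cosh x).sub (differentiableAt_const 1)).sub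
          ((differentiable_pow 2 x).div_const 2) |>.differentiableWithinAt
      · intro x hx
        rw [interior_Ici, Set.mem_Ioi] at hx
        have hd : HasDerivAt (fun x : ℝ => Real.cosh x - 1 - x^2/2) (Real.sinh x - x) x := by
          have := ((Real.hasDerivAt_cosh x).sub_const 1).sub
            ((hasDerivAt_pow 2 x).div_const 2)
          have e : Real.sinh x - ((2:ℕ):ℝ) * x ^ (2 - 1) / 2 = Real.sinh x - x := by
            push_cast
            ring
          rw [e] at this
          exact this
        rw [hd.deriv]
        have : x ≤ Real.sinh x := Real.self_le_sinh_iff.mpr hx.le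
        linarith
    have h0 : (fun x : ℝ => Real.cosh x - 1 - x^2/2) 0 = 0 := by simp
    have := hmono (Set.self_mem_Ici) (Set.mem_Ici.mpr hs) hs
    rw [h0] at this
    simp only at this
    linarith
  have h := key |t| (abs_nonneg t)
  rw [Real.cosh_abs] at h
  have h2 : |t|^2 = t^2 := sq_abs t
  rw [Real.cosh_eq] at h
  nlinarith [h]
set_option linter.unusedSectionVars false
section Aux
open Finset GibbsEntropy

variable {A : Type*} [Fintype A] [DecidableEq A]

/-- word counts -/
def cnt (n k : ℕ) (x : ℕ → A) (a : Fin k → A) : ℕ :=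
  ((Finset.range n).filter (fun j => ∀ i : Fin k, x ((j + i.val) % n) = a i)).card

lemma empFreq_eq_cnt (n k : ℕ) (x : ℕ → A) (a : Fin k → A) :
    empFreq n k x a = (cnt n k x a : ℝ) / n := rfl

lemma cnt_le (n k : ℕ) (x : ℕ → A) (a : Fin k → A) : cnt n k x a ≤ n := by
  classical
  calc cnt n k x a ≤ (Finset.range n).card := Finset.card_filter_le _ _
  _ = n := Finset.card_range n

lemma cnt_filter_eq (n k : ℕ) (x : ℕ → A) (a : Fin k → A) :
    cnt n k x a
      = ((Finset.range n).filter (fun j => (fun i : Fin k => x ((j + i.val) % n)) = a)).card := by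
  classical
  unfold cnt
  congr 1
  apply Finset.filter_congr
  intro j _
  simp [funext_iff]

lemma sum_cnt (n k : ℕ) (x : ℕ → A) : ∑ a : Fin k → A, cnt n k x a = n := by
  classical
  calc ∑ a : Fin k → A, cnt n k x a
      = ∑ a : Fin k → A,
        ((Finset.range n).filter (fun j => (fun i : Fin k => x ((j + i.val) % n)) = a)).card :=
        Finset.sum_congr rfl (fun a _ => cnt_filter_eq n k x a)
    _ = (Finset.range n).card :=
        (Finset.card_eq_sum_card_fiberwise (fun a _ => Finset.mem_univ _)).symm
    _ = n := Finset.card_range n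

end Aux
set_option linter.unusedSectionVars false
section Aux2
open Finset GibbsEntropy

variable {A : Type*} [Fintype A] [DecidableEq A]

lemma glog_mono {c c' : ℕ} (h : c ≤ c') :
    (c : ℝ) * Real.log c ≤ (c' : ℝ) * Real.log c' := by
  rcases Nat.eq_zero_or_pos c with hc | hc
  · subst hc
    simp only [Nat.cast_zero, zero_mul]
    rcases Nat.eq_zero_or_pos c' with hc' | hc'
    · simp [hc']
    · have h1 : (1:ℝ) ≤ c' := by exact_mod_cast hc'
      have := Real.log_nonneg h1
      positivity
  · have h1 : (1:ℝ) ≤ c := by exact_mod_cast hc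
    have hcc : (c:ℝ) ≤ c' := by exact_mod_cast h
    apply mul_le_mul hcc (Real.log_le_log (by positivity) hcc) (Real.log_nonneg h1)
      (by positivity)

lemma glog_diff_le {n c c' : ℕ} (hc : c ≤ n) (h : c' ≤ c) :
    |(c:ℝ) * Real.log c - (c':ℝ) * Real.log c'| ≤ |(c:ℝ) - (c':ℝ)| * (Real.log n + 1) := by
  · have hmono := glog_mono h
    have hcast : (c':ℝ) ≤ (c:ℝ) := by exact_mod_cast h
    rw [abs_of_nonneg (by linarith), abs_of_nonneg (by linarith)]
    rcases Nat.eq_zero_or_pos c' with h0 | h0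
    · subst h0
      simp only [Nat.cast_zero, zero_mul, sub_zero]
      rcases Nat.eq_zero_or_pos c with hc0 | hc0
      · simp [hc0]
      · have h1 : (1:ℝ) ≤ c := by exact_mod_cast hc0
        have hn1 : (1:ℝ) ≤ n := by exact_mod_cast hc0.trans_le hc
        have hlog : Real.log c ≤ Real.log n := Real.log_le_log (by positivity) (by exact_mod_cast hc)
        have hln : 0 ≤ Real.log n := Real.log_nonneg hn1
        nlinarith
    · have hc0 : 0 < c := lt_of_lt_of_le h0 h
      have h1 : (1:ℝ) ≤ c' := by exact_mod_cast h0
      have h1c : (1:ℝ) ≤ c := by exact_mod_cast hc0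
      have hn1 : (1:ℝ) ≤ n := by exact_mod_cast hc0.trans_le hc
      have hlogc : Real.log c ≤ Real.log n := Real.log_le_log (by positivity) (by exact_mod_cast hc)
      have hratio : Real.log c - Real.log c' ≤ ((c:ℝ) - c') / c' := by
        rw [← Real.log_div (by positivity) (by positivity)]
        have := Real.log_le_sub_one_of_pos (x := (c:ℝ)/c') (by positivity)
        calc Real.log ((c:ℝ)/c') ≤ (c:ℝ)/c' - 1 := this
          _ = ((c:ℝ) - c')/c' := by field_simp
      have hln : 0 ≤ Real.log n := Real.log_nonneg hn1
      have hc'pos : (0:ℝ) < c' := by positivity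
      have key : (c:ℝ) * Real.log c - (c':ℝ) * Real.log c'
          = ((c:ℝ) - c') * Real.log c + (c':ℝ) * (Real.log c - Real.log c') := by ring
      rw [key]
      have h2 : (c':ℝ) * (Real.log c - Real.log c') ≤ (c:ℝ) - c' := by
        calc (c':ℝ) * (Real.log c - Real.log c') ≤ (c':ℝ) * (((c:ℝ) - c')/c') :=
          mul_le_mul_of_nonneg_left hratio (by positivity)
        _ = (c:ℝ) - c' := by field_simp
      have h3 : ((c:ℝ) - c') * Real.log c ≤ ((c:ℝ) - c') * Real.log n :=
        mul_le_mul_of_nonneg_left hlogc (by linarith)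
      nlinarith

lemma glog_diff {n c c' : ℕ} (hc : c ≤ n) (hc' : c' ≤ n) :
    |(c:ℝ) * Real.log c - (c':ℝ) * Real.log c'| ≤ |(c:ℝ) - (c':ℝ)| * (Real.log n + 1) := by
  rcases le_total c' c with h | h
  · exact glog_diff_le hc h
  · rw [abs_sub_comm, abs_sub_comm (c:ℝ)]
    exact glog_diff_le hc' h

end Aux2
set_option linter.unusedSectionVars false
section Aux3
open Finset GibbsEntropy

variable {A : Type*} [Fintype A] [DecidableEq A]

lemma cnt_diff (n k : ℕ) (x y : ℕ → A) (j₀ : ℕ) (hj₀ : j₀ < n)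
    (hxy : ∀ m, m < n → m ≠ j₀ → x m = y m) :
    ∑ a : Fin k → A, |(cnt n k x a : ℝ) - (cnt n k y a : ℝ)| ≤ 2 * k := by
  classical
  have hn : 0 < n := lt_of_le_of_lt (Nat.zero_le _) hj₀
  set wx : ℕ → Fin k → A := fun j => fun i : Fin k => x ((j + i.val) % n) with hwx
  set wy : ℕ → Fin k → A := fun j => fun i : Fin k => y ((j + i.val) % n) with hwy
  set J : Finset ℕ := (Finset.range n).filter (fun j => wx j ≠ wy j) with hJ
  have hJcard : J.card ≤ k := by
    have hsub : J ⊆ (Finset.range k).image (fun i => (j₀ + n - i % n) % n) := by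
      intro j hj
      rw [hJ, Finset.mem_filter, Finset.mem_range] at hj
      obtain ⟨hjn, hne⟩ := hj
      have hex : ∃ i : Fin k, x ((j + i.val) % n) ≠ y ((j + i.val) % n) := by
        by_contra hcon
        push_neg at hcon
        exact hne (funext fun i => hcon i)
      obtain ⟨i, hi⟩ := hex
      have hmod : (j + i.val) % n < n := Nat.mod_lt _ hn
      have heq : (j + i.val) % n = j₀ := by
        by_contra hne2
        exact hi (hxy _ hmod hne2)
      rw [Finset.mem_image]
      refine ⟨i.val, Finset.mem_range.mpr i.isLt, ?_⟩
      have hr : i.val % n < n := Nat.mod_lt _ hn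
      have h2 : (j + i.val % n) % n = j₀ := by
        rw [Nat.add_mod j (i.val % n) n, Nat.mod_mod_of_dvd _ (dvd_refl n), ← Nat.add_mod]
        exact heq
      rcases lt_or_ge (j + i.val % n) n with h3 | h3
      · rw [Nat.mod_eq_of_lt h3] at h2
        have h4 : j₀ + n - i.val % n = j + n := by omega
        rw [h4, Nat.add_mod_right, Nat.mod_eq_of_lt hjn]
      · rw [Nat.mod_eq_sub_mod h3, Nat.mod_eq_of_lt (by omega)] at h2
        have h4 : j₀ + n - i.val % n = j := by omega
        rw [h4, Nat.mod_eq_of_lt hjn]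
    calc J.card ≤ _ := Finset.card_le_card hsub
      _ ≤ (Finset.range k).card := Finset.card_image_le
      _ = k := Finset.card_range k
  set Sx : (Fin k → A) → Finset ℕ := fun a => (Finset.range n).filter (fun j => wx j = a) with hSx
  set Sy : (Fin k → A) → Finset ℕ := fun a => (Finset.range n).filter (fun j => wy j = a) with hSy
  have hcx : ∀ a, cnt n k x a = (Sx a).card := fun a => cnt_filter_eq n k x a
  have hcy : ∀ a, cnt n k y a = (Sy a).card := fun a => cnt_filter_eq n k y a
  have habs : ∀ a : Fin k → A, |(cnt n k x a : ℝ) - (cnt n k y a : ℝ)|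
      ≤ ((Sx a \ Sy a).card : ℝ) + ((Sy a \ Sx a).card : ℝ) := by
    intro a
    have h1 : (Sx a).card ≤ (Sy a).card + (Sx a \ Sy a).card := by
      calc (Sx a).card ≤ (Sx a ∪ Sy a).card := Finset.card_le_card Finset.subset_union_left
        _ = (Sx a \ Sy a).card + (Sy a).card := (Finset.card_sdiff_add_card _ _).symm
        _ = (Sy a).card + (Sx a \ Sy a).card := by omega
    have h2 : (Sy a).card ≤ (Sx a).card + (Sy a \ Sx a).card := by
      calc (Sy a).card ≤ (Sy a ∪ Sx a).card := Finset.card_le_card Finset.subset_union_left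
        _ = (Sy a \ Sx a).card + (Sx a).card := (Finset.card_sdiff_add_card _ _).symm
        _ = (Sx a).card + (Sy a \ Sx a).card := by omega
    have h1' : (((Sx a).card):ℝ) ≤ ((Sy a).card:ℝ) + ((Sx a \ Sy a).card:ℝ) := by exact_mod_cast h1
    have h2' : (((Sy a).card):ℝ) ≤ ((Sx a).card:ℝ) + ((Sy a \ Sx a).card:ℝ) := by exact_mod_cast h2
    rw [hcx, hcy, abs_sub_le_iff]
    constructor <;> push_cast <;> linarith
  have hsumx : ∑ a : Fin k → A, (Sx a \ Sy a).card ≤ J.card := by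
    have hdisj : ∀ a ∈ (Finset.univ : Finset (Fin k → A)), ∀ b ∈ Finset.univ, a ≠ b →
        Disjoint (Sx a \ Sy a) (Sx b \ Sy b) := by
      intro a _ b _ hab
      rw [Finset.disjoint_left]
      intro j hja hjb
      rw [Finset.mem_sdiff, hSx, Finset.mem_filter] at hja hjb
      exact hab (hja.1.2.symm.trans hjb.1.2)
    calc ∑ a : Fin k → A, (Sx a \ Sy a).card
        = (Finset.univ.biUnion (fun a => Sx a \ Sy a)).card := (Finset.card_biUnion hdisj).symm
      _ ≤ J.card := by
          apply Finset.card_le_card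
          intro j hj
          rw [Finset.mem_biUnion] at hj
          obtain ⟨a, _, hj⟩ := hj
          rw [Finset.mem_sdiff, hSx, Finset.mem_filter] at hj
          rw [hJ, Finset.mem_filter]
          refine ⟨hj.1.1, ?_⟩
          intro hcon
          apply hj.2
          rw [hSy, Finset.mem_filter]
          exact ⟨hj.1.1, hcon ▸ hj.1.2⟩
  have hsumy : ∑ a : Fin k → A, (Sy a \ Sx a).card ≤ J.card := by
    have hdisj : ∀ a ∈ (Finset.univ : Finset (Fin k → A)), ∀ b ∈ Finset.univ, a ≠ b →
        Disjoint (Sy a \ Sx a) (Sy b \ Sx b) := by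
      intro a _ b _ hab
      rw [Finset.disjoint_left]
      intro j hja hjb
      rw [Finset.mem_sdiff, hSy, Finset.mem_filter] at hja hjb
      exact hab (hja.1.2.symm.trans hjb.1.2)
    calc ∑ a : Fin k → A, (Sy a \ Sx a).card
        = (Finset.univ.biUnion (fun a => Sy a \ Sx a)).card := (Finset.card_biUnion hdisj).symm
      _ ≤ J.card := by
          apply Finset.card_le_card
          intro j hj
          rw [Finset.mem_biUnion] at hj
          obtain ⟨a, _, hj⟩ := hj
          rw [Finset.mem_sdiff, hSy, Finset.mem_filter] at hj
          rw [hJ, Finset.mem_filter]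
          refine ⟨hj.1.1, ?_⟩
          intro hcon
          apply hj.2
          rw [hSx, Finset.mem_filter]
          exact ⟨hj.1.1, hcon ▸ hj.1.2⟩
  calc ∑ a : Fin k → A, |(cnt n k x a : ℝ) - (cnt n k y a : ℝ)|
      ≤ ∑ a : Fin k → A, (((Sx a \ Sy a).card : ℝ) + ((Sy a \ Sx a).card : ℝ)) :=
        Finset.sum_le_sum (fun a _ => habs a)
    _ = (↑(∑ a : Fin k → A, (Sx a \ Sy a).card) : ℝ) + ↑(∑ a : Fin k → A, (Sy a \ Sx a).card) := by
        rw [Finset.sum_add_distrib]; push_cast; ring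
    _ ≤ (J.card : ℝ) + (J.card : ℝ) := by
        have h1 : ((∑ a : Fin k → A, (Sx a \ Sy a).card : ℕ) : ℝ) ≤ (J.card : ℝ) := by exact_mod_cast hsumx
        have h2 : ((∑ a : Fin k → A, (Sy a \ Sx a).card : ℕ) : ℝ) ≤ (J.card : ℝ) := by exact_mod_cast hsumy
        linarith
    _ ≤ 2 * k := by
        have : (J.card : ℝ) ≤ k := by exact_mod_cast hJcard
        linarith

end Aux3
set_option linter.unusedSectionVars false
section Aux4
open Finset GibbsEntropy MeasureTheory

variable {A : Type*} [Fintype A] [DecidableEq A]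

lemma empEnt_eq (n k : ℕ) (hn : 0 < n) (x : ℕ → A) :
    empEnt n k x = Real.log n
      - (1/n) * ∑ a : Fin k → A, (cnt n k x a : ℝ) * Real.log (cnt n k x a) := by
  have hnR : (0:ℝ) < n := by exact_mod_cast hn
  unfold empEnt blockEnt
  have hterm : ∀ a : Fin k → A, empFreq n k x a * Real.log (empFreq n k x a)
      = (1/n) * ((cnt n k x a : ℝ) * Real.log (cnt n k x a))
        - ((cnt n k x a : ℝ)/n) * Real.log n := by
    intro a
    rw [empFreq_eq_cnt]
    rcases Nat.eq_zero_or_pos (cnt n k x a) with h0 | h0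
    · rw [h0]; simp
    · have hc : (0:ℝ) < cnt n k x a := by exact_mod_cast h0
      rw [Real.log_div (by positivity) (by positivity)]
      ring
  rw [Finset.sum_congr rfl (fun a _ => hterm a), Finset.sum_sub_distrib]
  have hsum : ∑ a : Fin k → A, ((cnt n k x a : ℝ)/n) * Real.log n
      = Real.log n := by
    rw [← Finset.sum_mul]
    have : ∑ a : Fin k → A, ((cnt n k x a : ℝ)/n) = 1 := by
      rw [← Finset.sum_div]
      have : ∑ a : Fin k → A, (cnt n k x a : ℝ) = n := by
        exact_mod_cast congrArg (Nat.cast : ℕ → ℝ) (sum_cnt n k x)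
      rw [this]; field_simp
    rw [this, one_mul]
  rw [hsum, ← Finset.mul_sum]
  ring

lemma empEnt_diff (n k : ℕ) (x y : ℕ → A) (j₀ : ℕ) (hj₀ : j₀ < n)
    (hxy : ∀ m, m < n → m ≠ j₀ → x m = y m) :
    |empEnt n k x - empEnt n k y| ≤ 2 * k * (Real.log n + 1) / n := by
  have hn : 0 < n := lt_of_le_of_lt (Nat.zero_le _) hj₀
  have hnR : (0:ℝ) < n := by exact_mod_cast hn
  have hn1 : (1:ℝ) ≤ n := by exact_mod_cast hn
  have hln : 0 ≤ Real.log n := Real.log_nonneg hn1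
  rw [empEnt_eq n k hn x, empEnt_eq n k hn y]
  set sx := ∑ a : Fin k → A, (cnt n k x a : ℝ) * Real.log (cnt n k x a) with hsx
  set sy := ∑ a : Fin k → A, (cnt n k y a : ℝ) * Real.log (cnt n k y a) with hsy
  calc |(Real.log n - (1/n) * sx) - (Real.log n - (1/n) * sy)|
      = (1/n) * |sy - sx| := by
        rw [show (Real.log n - (1/n) * sx) - (Real.log n - (1/n) * sy) = (1/n) * (sy - sx) by ring,
          abs_mul, abs_of_pos (show (0:ℝ) < 1/n by positivity)]
    _ ≤ (1/n) * ∑ a : Fin k → A, |(cnt n k y a : ℝ) * Real.log (cnt n k y a)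
          - (cnt n k x a : ℝ) * Real.log (cnt n k x a)| := by
        rw [hsy, hsx, ← Finset.sum_sub_distrib]
        exact mul_le_mul_of_nonneg_left (Finset.abs_sum_le_sum_abs _ _) (by positivity)
    _ ≤ (1/n) * ∑ a : Fin k → A, |(cnt n k y a : ℝ) - (cnt n k x a : ℝ)| * (Real.log n + 1) := by
        apply mul_le_mul_of_nonneg_left _ (by positivity)
        apply Finset.sum_le_sum
        intro a _
        exact glog_diff (cnt_le n k y a) (cnt_le n k x a)
    _ = (1/n) * (Real.log n + 1) * ∑ a : Fin k → A, |(cnt n k y a : ℝ) - (cnt n k x a : ℝ)| := by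
        rw [← Finset.sum_mul]; ring
    _ ≤ (1/n) * (Real.log n + 1) * (2 * k) := by
        apply mul_le_mul_of_nonneg_left _ (by positivity)
        exact cnt_diff n k y x j₀ hj₀ (fun m hm hne => (hxy m hm hne).symm)
    _ = 2 * k * (Real.log n + 1) / n := by ring

lemma empEnt_congr (n k : ℕ) (x y : ℕ → A) (h : ∀ m, m < n → x m = y m) :
    empEnt n k x = empEnt n k y := by
  have hf : ∀ a : Fin k → A, empFreq n k x a = empFreq n k y a := by
    intro a
    unfold empFreq
    have hfil : ((Finset.range n).filter (fun j => ∀ i : Fin k, x ((j + i.val) % n) = a i))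
        = ((Finset.range n).filter (fun j => ∀ i : Fin k, y ((j + i.val) % n) = a i)) := by
      apply Finset.filter_congr
      intro j hj
      have hn : 0 < n := lt_of_le_of_lt (Nat.zero_le _) (Finset.mem_range.mp hj)
      constructor
      · intro hp i; rw [← h _ (Nat.mod_lt _ hn)]; exact hp i
      · intro hp i; rw [h _ (Nat.mod_lt _ hn)]; exact hp i
    rw [hfil]
  unfold empEnt blockEnt
  exact congrArg Neg.neg (Finset.sum_congr rfl fun a _ => by rw [hf a])

end Aux4
set_option linter.unusedSectionVars false
section Aux5
open Finset GibbsEntropy MeasureTheory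

variable {A : Type*} [Fintype A] [DecidableEq A]

lemma shift_iter (m : ℕ) (x : ℕ → A) (i : ℕ) : (shift^[m] x) i = x (i + m) := by
  induction m generalizing x with
  | zero => rfl
  | succ m ih =>
    rw [Function.iterate_succ_apply, ih (shift x)]
    show x (i + m + 1) = x (i + (m+1))
    ring_nf

lemma dTheta_nonneg {θ : ℝ} (hθ : 0 ≤ θ) (x y : ℕ → A) : 0 ≤ dTheta θ x y := by
  unfold dTheta
  split
  · exact le_refl _
  · positivity

lemma dTheta_eq_one {θ : ℝ} (x y : ℕ → A) (h : x 0 ≠ y 0) : dTheta θ x y = 1 := by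
  unfold dTheta
  rw [dif_neg (fun hc => h (congrFun hc 0))]
  have h0 : Nat.find (p := fun n => x n ≠ y n) ⟨0, h⟩ = 0 := Nat.find_eq_zero _ |>.mpr h
  simp only [h0, pow_zero]

lemma measurable_local [MeasurableSpace A] [MeasurableSingletonClass A]
    (n : ℕ) (F : (Fin n → A) → ℝ) :
    Measurable fun x : ℕ → A => F (fun i : Fin n => x i.val) :=
  (measurable_of_countable F).comp (measurable_pi_lambda _ (fun i => measurable_pi_apply i.val))

lemma integrable_local [MeasurableSpace A] [MeasurableSingletonClass A]
    (μ : Measure (ℕ → A)) [IsProbabilityMeasure μ] (n : ℕ) (F : (Fin n → A) → ℝ) :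
    Integrable (fun x : ℕ → A => F (fun i : Fin n => x i.val)) μ := by
  refine ⟨(measurable_local n F).aestronglyMeasurable, ?_⟩
  apply MeasureTheory.HasFiniteIntegral.of_bounded (C := ∑ w : Fin n → A, |F w|)
  filter_upwards with x
  rw [Real.norm_eq_abs]
  exact Finset.single_le_sum (f := fun w => |F w|) (fun w _ => abs_nonneg _) (Finset.mem_univ _)

end Aux5
open GibbsEntropy MeasureTheory Finset

set_option maxHeartbeats 1000000 in
theorem statement_7 {A : Type*} [Fintype A] [DecidableEq A] [MeasurableSpace A] [MeasurableSingletonClass A]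
    (hA : 2 ≤ Fintype.card A)
    (θ : ℝ) (hθ : θ ∈ Set.Ioo (0 : ℝ) 1)
    (φ : (ℕ → A) → ℝ) (hφ : LipFun θ φ)
    (μ : Measure (ℕ → A)) [IsProbabilityMeasure μ]
    (hσ : MeasurePreserving (shift (A := A)) μ μ)
    (hGibbs : IsGibbs φ μ)
    (D : ℝ) (hD : 0 < D)
    (hIneq : ∀ (n : ℕ), 1 ≤ n → ∀ K : (Fin n → (ℕ → A)) → ℝ, SepLip θ K →
      ∫ x, Real.exp (K (traj n x)) ∂μ ≤
        Real.exp (∫ y, K (traj n y) ∂μ) * Real.exp (D * ∑ j : Fin n, lipCoord θ K j ^ 2)) :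
    ∀ α ∈ Set.Ioo (0 : ℝ) 1, ∀ n : ℕ, 2 ≤ n → ∀ k : ℕ, 1 ≤ k →
      (k : ℝ) ≤ α / (2 * Real.log (Fintype.card A)) * Real.log n →
      ∫ x, (empEnt n k x / (k : ℝ) - ∫ y, empEnt n k y / (k : ℝ) ∂μ) ^ 2 ∂μ ≤
        8 * D * Real.log n ^ 2 / (n : ℝ) ^ ((1 : ℝ) - α) := by
  intro α hα n hn2 k hk1 hkA
  classical
  obtain ⟨hα0, hα1⟩ := hα
  have hn0 : 0 < n := by omega
  have hnR : (0:ℝ) < n := by exact_mod_cast hn0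
  have hkR : (0:ℝ) < k := by exact_mod_cast hk1
  -- logarithm facts
  have hlog2pos : (0:ℝ) < Real.log 2 := Real.log_pos (by norm_num)
  have hlogA : Real.log 2 ≤ Real.log (Fintype.card A) := by
    apply Real.log_le_log (by norm_num)
    exact_mod_cast hA
  have hlogApos : 0 < Real.log (Fintype.card A) := lt_of_lt_of_le hlog2pos hlogA
  have hlognpos : 0 < Real.log n := Real.log_pos (by exact_mod_cast hn2)
  have hαL : 2 * Real.log (Fintype.card A) ≤ α * Real.log n := by
    have h1 : (1:ℝ) ≤ α / (2 * Real.log (Fintype.card A)) * Real.log n :=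
      le_trans (by exact_mod_cast hk1) hkA
    have h2 := mul_le_mul_of_nonneg_left h1
      (show (0:ℝ) ≤ 2 * Real.log (Fintype.card A) by positivity)
    calc 2 * Real.log (Fintype.card A) = 2 * Real.log (Fintype.card A) * 1 := by ring
      _ ≤ 2 * Real.log (Fintype.card A) * (α / (2 * Real.log (Fintype.card A)) * Real.log n) := h2
      _ = α * Real.log n := by field_simp
  have hLlb : 2 * Real.log 2 ≤ Real.log n := by
    have h1 : α * Real.log n ≤ Real.log n := by nlinarith
    nlinarith
  have hnα : (4:ℝ) ≤ (n:ℝ) ^ (α:ℝ) := by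
    rw [Real.rpow_def_of_pos hnR]
    have h1 : Real.exp (2 * Real.log 2) ≤ Real.exp (Real.log n * α) := by
      apply Real.exp_le_exp.mpr
      nlinarith
    have h2 : Real.exp (2 * Real.log 2) = 4 := by
      rw [two_mul, Real.exp_add, Real.exp_log (by norm_num : (0:ℝ) < 2)]
      norm_num
    linarith
  have hnαpos : (0:ℝ) < (n:ℝ) ^ (α:ℝ) := Real.rpow_pos_of_pos hnR α
  -- local structure of the observable
  set F : (Fin n → A) → ℝ :=
    fun w => empEnt n k (fun m => if h : m < n then w ⟨m, h⟩ else w ⟨0, hn0⟩) / k with hFdef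
  set f : (ℕ → A) → ℝ := fun x => empEnt n k x / k with hfdef
  have hlocal : ∀ x : ℕ → A, F (fun i : Fin n => x i.val) = f x := by
    intro x
    simp only [hFdef, hfdef]
    congr 1
    apply empEnt_congr
    intro m hm
    simp only [dif_pos hm]
  have hfint : Integrable f μ := by
    have h := integrable_local μ n F
    rwa [funext hlocal] at h
  set m0 := ∫ x, f x ∂μ with hm0
  set L := Real.log n with hL
  set B : ℝ := 2 * (L + 1) / n with hBdef
  have hBpos : 0 < B := by
    rw [hBdef]
    apply div_pos _ hnR
    nlinarith
  -- the oscillation bound for F under change of one symbol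
  have hFdiff : ∀ (w w' : Fin n → A) (j : Fin n), (∀ i : Fin n, i ≠ j → w i = w' i) →
      |F w - F w'| ≤ B := by
    intro w w' j hw
    simp only [hFdef]
    rw [div_sub_div_same, abs_div, abs_of_pos hkR]
    have hEnt := empEnt_diff n k
      (fun m => if h : m < n then w ⟨m, h⟩ else w ⟨0, hn0⟩)
      (fun m => if h : m < n then w' ⟨m, h⟩ else w' ⟨0, hn0⟩)
      j.val j.isLt ?_
    · calc |empEnt n k (fun m => if h : m < n then w ⟨m, h⟩ else w ⟨0, hn0⟩)
            - empEnt n k (fun m => if h : m < n then w' ⟨m, h⟩ else w' ⟨0, hn0⟩)| / (k:ℝ)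
          ≤ (2 * k * (Real.log n + 1) / n) / (k:ℝ) := by
            apply div_le_div_of_nonneg_right hEnt hkR.le |>.trans_eq rfl
        _ = B := by rw [hBdef, hL]; field_simp
    · intro m hm hmj
      simp only [dif_pos hm]
      exact hw ⟨m, hm⟩ (fun hc => hmj (congrArg Fin.val hc))
  -- master exponential bound
  have hexpint : ∀ lam : ℝ, Integrable (fun x => Real.exp (lam * (f x - m0))) μ := by
    intro lam
    have h := integrable_local μ n (fun w => Real.exp (lam * (F w - m0)))
    have heq : (fun x : ℕ → A => Real.exp (lam * (F (fun i : Fin n => x i.val) - m0)))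
        = fun x => Real.exp (lam * (f x - m0)) := by
      funext x; rw [hlocal x]
    rwa [heq] at h
  have hsqint : Integrable (fun x => (f x - m0)^2) μ := by
    have h := integrable_local μ n (fun w => (F w - m0)^2)
    have heq : (fun x : ℕ → A => (F (fun i : Fin n => x i.val) - m0)^2)
        = fun x => (f x - m0)^2 := by
      funext x; rw [hlocal x]
    rwa [heq] at h
  have master : ∀ lam : ℝ, ∫ x, Real.exp (lam * (f x - m0)) ∂μ
      ≤ Real.exp (D * (n * (lam^2 * B^2))) := by
    intro lam
    set K : (Fin n → (ℕ → A)) → ℝ := fun y => lam * (F (fun i => y i 0) - m0) with hK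
    have hKtraj : ∀ x : ℕ → A, K (traj n x) = lam * (f x - m0) := by
      intro x
      simp only [hK]
      have h1 : (fun i : Fin n => traj n x i 0) = (fun i : Fin n => x i.val) := by
        funext i
        show (shift^[i.val] x) 0 = x i.val
        rw [shift_iter, Nat.zero_add]
      rw [h1, hlocal x]
    have hKcoordLip : ∀ (j : Fin n) (xx : Fin n → (ℕ → A)) (y : ℕ → A),
        |K xx - K (Function.update xx j y)| ≤ (|lam| * B) * dTheta θ (xx j) y := by
      intro j xx y
      by_cases h0 : (xx j) 0 = y 0
      · have hw : (fun i : Fin n => Function.update xx j y i 0) = (fun i : Fin n => xx i 0) := by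
          funext i
          by_cases hij : i = j
          · subst hij; rw [Function.update_self]; exact h0.symm
          · rw [Function.update_of_ne hij]
        have heq : K (Function.update xx j y) = K xx := by
          simp only [hK, hw]
        rw [heq, sub_self, abs_zero]
        exact mul_nonneg (mul_nonneg (abs_nonneg _) hBpos.le) (dTheta_nonneg hθ.1.le _ _)
      · rw [dTheta_eq_one _ _ h0, mul_one]
        simp only [hK]
        rw [show lam * (F (fun i => xx i 0) - m0)
              - lam * (F (fun i => Function.update xx j y i 0) - m0)
            = lam * (F (fun i => xx i 0) - F (fun i => Function.update xx j y i 0)) by ring,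
          abs_mul]
        exact mul_le_mul_of_nonneg_left
          (hFdiff (fun i => xx i 0) (fun i => Function.update xx j y i 0) j
            (fun i hij => (congrFun (Function.update_of_ne hij y xx) 0).symm))
          (abs_nonneg lam)
    have hSep : SepLip θ K := fun j => ⟨|lam| * B, mul_nonneg (abs_nonneg _) hBpos.le, hKcoordLip j⟩
    have hlip0 : ∀ j : Fin n, 0 ≤ lipCoord θ K j := by
      intro j
      exact le_csInf ⟨|lam| * B, mul_nonneg (abs_nonneg _) hBpos.le, hKcoordLip j⟩ (fun b hb => hb.1)
    have hlip : ∀ j : Fin n, lipCoord θ K j ≤ |lam| * B := by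
      intro j
      exact csInf_le ⟨0, fun b hb => hb.1⟩ ⟨mul_nonneg (abs_nonneg _) hBpos.le, hKcoordLip j⟩
    have hKint : ∫ y, K (traj n y) ∂μ = 0 := by
      rw [funext hKtraj, MeasureTheory.integral_const_mul,
        integral_sub hfint (integrable_const m0), integral_const, probReal_univ,
        one_smul, ← hm0, sub_self, mul_zero]
    have h1 := hIneq n (by omega) K hSep
    rw [hKint, Real.exp_zero, one_mul] at h1
    have h2 : D * ∑ j : Fin n, lipCoord θ K j ^ 2 ≤ D * (n * (lam^2 * B^2)) := by
      apply mul_le_mul_of_nonneg_left _ hD.le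
      calc ∑ j : Fin n, lipCoord θ K j ^ 2 ≤ ∑ _j : Fin n, (|lam| * B)^2 :=
            Finset.sum_le_sum (fun j _ => pow_le_pow_left₀ (hlip0 j) (hlip j) 2)
        _ = n * (|lam| * B)^2 := by
            rw [Finset.sum_const, Finset.card_univ, Fintype.card_fin, nsmul_eq_mul]
        _ = n * (lam^2 * B^2) := by rw [mul_pow, sq_abs]
    calc ∫ x, Real.exp (lam * (f x - m0)) ∂μ
        = ∫ x, Real.exp (K (traj n x)) ∂μ := by simp only [hKtraj]
      _ ≤ Real.exp (D * ∑ j : Fin n, lipCoord θ K j ^ 2) := h1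
      _ ≤ Real.exp (D * (n * (lam^2 * B^2))) := Real.exp_le_exp.mpr h2
  -- choose lam
  set SS : ℝ := n * B^2 with hSS
  have hSSpos : 0 < SS := by
    rw [hSS]; exact mul_pos hnR (pow_pos hBpos 2)
  have h10DS : (0:ℝ) < 10 * D * SS := mul_pos (mul_pos (by norm_num) hD) hSSpos
  set lam : ℝ := Real.sqrt (1 / (10 * D * SS)) with hlam
  have hlam2 : lam^2 = 1/(10*D*SS) := Real.sq_sqrt (le_of_lt (one_div_pos.mpr h10DS))
  have hlampos : 0 < lam := Real.sqrt_pos.mpr (one_div_pos.mpr h10DS)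
  have hDS : D * (n * (lam^2 * B^2)) = 1/10 := by
    have hh : D * (n * (lam^2 * B^2)) = D * SS * lam^2 := by rw [hSS]; ring
    rw [hh, hlam2]
    field_simp
  have hexp10 : Real.exp (1/10 : ℝ) ≤ 10/9 := by
    have h1 := Real.add_one_le_exp (-(1/10) : ℝ)
    have h2 : Real.exp (-(1/10):ℝ) = (Real.exp (1/10:ℝ))⁻¹ := Real.exp_neg _
    rw [h2] at h1
    have h3 : (0:ℝ) < Real.exp (1/10:ℝ) := Real.exp_pos _
    have h4 : Real.exp (1/10:ℝ) * (Real.exp (1/10:ℝ))⁻¹ = 1 := mul_inv_cancel₀ h3.ne'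
    nlinarith [h1, h3, h4]
  -- variance bound
  have hplus := master lam
  have hminus := master (-lam)
  rw [hDS] at hplus
  rw [show D * (n * ((-lam)^2 * B^2)) = D * (n * (lam^2 * B^2)) by ring, hDS]
    at hminus
  have hpoint : ∀ x : ℕ → A, lam^2 * (f x - m0)^2
      ≤ Real.exp (lam * (f x - m0)) + Real.exp ((-lam) * (f x - m0)) - 2 := by
    intro x
    have := cosh_quad (lam * (f x - m0))
    have hsq : (lam * (f x - m0))^2 = lam^2 * (f x - m0)^2 := by ring
    have hneg : -(lam * (f x - m0)) = (-lam) * (f x - m0) := by ring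
    rw [hsq, hneg] at this
    linarith
  have hvar : lam^2 * ∫ x, (f x - m0)^2 ∂μ ≤ 2 * Real.exp (1/10 : ℝ) - 2 := by
    have hint1 := hexpint lam
    have hint2 := hexpint (-lam)
    have hadd : Integrable
        (fun x => Real.exp (lam * (f x - m0)) + Real.exp ((-lam) * (f x - m0))) μ :=
      hint1.add hint2
    have hsub : Integrable
        (fun x => Real.exp (lam * (f x - m0)) + Real.exp ((-lam) * (f x - m0)) - 2) μ :=
      hadd.sub (integrable_const 2)
    have hlhs : ∫ x, lam^2 * (f x - m0)^2 ∂μ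
        ≤ ∫ x, (Real.exp (lam * (f x - m0)) + Real.exp ((-lam) * (f x - m0)) - 2) ∂μ := by
      apply integral_mono (hsqint.const_mul _) hsub
      intro x
      exact hpoint x
    rw [MeasureTheory.integral_const_mul] at hlhs
    rw [integral_sub hadd (integrable_const 2),
      integral_add hint1 hint2, integral_const, probReal_univ, one_smul]
      at hlhs
    linarith
  have hVar : ∫ x, (f x - m0)^2 ∂μ ≤ (20/9) * D * SS := by
    have h1 : ∫ x, (f x - m0)^2 ∂μ ≤ (2 * Real.exp (1/10:ℝ) - 2) / lam^2 := by
      rw [le_div_iff₀ (pow_pos hlampos 2)]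
      linarith [hvar]
    have h2 : (2 * Real.exp (1/10:ℝ) - 2) / lam^2 = (2 * Real.exp (1/10:ℝ) - 2) * (10*D*SS) := by
      rw [hlam2]
      field_simp
    rw [h2] at h1
    have h3 : (2 * Real.exp (1/10:ℝ) - 2) * (10*D*SS) ≤ (2 * (10/9) - 2) * (10*D*SS) := by
      apply mul_le_mul_of_nonneg_right _ h10DS.le
      linarith
    calc ∫ x, (f x - m0)^2 ∂μ ≤ (2 * (10/9) - 2) * (10*D*SS) := le_trans h1 h3
      _ = (20/9) * D * SS := by ring
  -- final arithmetic
  have hSSval : SS = 4 * (L+1)^2 / n := by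
    rw [hSS, hBdef]
    field_simp
    ring
  have hfinal : (20/9) * D * SS ≤ 8 * D * L^2 / (n:ℝ) ^ ((1:ℝ) - α) := by
    have hrw : (n:ℝ) ^ ((1:ℝ) - α) = (n:ℝ) / (n:ℝ) ^ (α:ℝ) := by
      rw [Real.rpow_sub hnR, Real.rpow_one]
    rw [hrw, div_div_eq_mul_div, hSSval]
    have hlog2 : (0.6931471803 : ℝ) < Real.log 2 := Real.log_two_gt_d9
    have hLval : (1.3862 : ℝ) ≤ L := by rw [hL]; linarith
    have hkey : (20/9) * (4 * (L+1)^2) ≤ 8 * L^2 * (n:ℝ)^(α:ℝ) := by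
      have h4 : 8 * L^2 * 4 ≤ 8 * L^2 * (n:ℝ)^(α:ℝ) := by
        apply mul_le_mul_of_nonneg_left hnα (by nlinarith [sq_nonneg L])
      nlinarith [sq_nonneg (L - 1.3862)]
    have h5 : (20:ℝ)/9 * D * (4 * (L+1)^2 / n) = ((20/9) * (4 * (L+1)^2)) * D / n := by ring
    have h6 : 8 * D * L^2 * (n:ℝ)^(α:ℝ) / n = (8 * L^2 * (n:ℝ)^(α:ℝ)) * D / n := by ring
    rw [h5, h6]
    exact div_le_div_of_nonneg_right (mul_le_mul_of_nonneg_right hkey hD.le) hnR.le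
  show ∫ x, (f x - m0)^2 ∂μ ≤ 8 * D * Real.log n ^ 2 / (n:ℝ) ^ ((1:ℝ) - α)
  exact le_trans hVar hfinal
end

section
/- Let A be a finite alphabet with |A| ≥ 2, and for n ≥ 2 and 1 ≤ k ≤ n consider the function K̃ : A^n → ℝ given by K̃(s_0,…,s_{n−1}) = Ĥ_k(s_0^{n−1}), the k-block empirical entropy. Then for every j ∈ {0,…,n−1}, the oscillation of K̃ at the j-th coordinate satisfies δ_j(K̃) ≤ 2k|A|^k (log n)/n. -/
open MeasureTheory Finset
open scoped ENNReal

section AuxOsc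
open Finset

noncomputable def flog (t : ℝ) : ℝ := t * Real.log t

lemma flog_nat_div (m n : ℕ) (hn : 0 < n) :
    flog ((m : ℝ) / n) = ((m : ℝ) * Real.log m - m * Real.log n) / n := by
  have hnR : (0:ℝ) < n := by exact_mod_cast hn
  rcases Nat.eq_zero_or_pos m with h | h
  · subst h; simp [flog]
  · have hm : (0:ℝ) < m := by exact_mod_cast h
    rw [flog, Real.log_div (by positivity) (by positivity)]
    ring

lemma two_log_ge_one {n : ℕ} (hn : 2 ≤ n) : 1 ≤ 2 * Real.log n := by
  have h2 : (0.6931471803 : ℝ) < Real.log 2 := Real.log_two_gt_d9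
  have h3 : Real.log 2 ≤ Real.log n := by
    apply Real.log_le_log (by norm_num)
    exact_mod_cast hn
  linarith

lemma flog_step {n : ℕ} (hn : 2 ≤ n) {a : ℕ} (ha : a + 1 ≤ n) :
    |flog (((a+1 : ℕ) : ℝ) / n) - flog ((a : ℝ) / n)| ≤ 2 * Real.log n / n := by
  have hn0 : 0 < n := by omega
  have hnR : (0:ℝ) < n := by exact_mod_cast hn0
  have hlogn : 0 ≤ Real.log n := Real.log_nonneg (by exact_mod_cast hn0)
  have h1 := two_log_ge_one hn
  set D : ℝ := ((a:ℝ)+1) * Real.log ((a:ℝ)+1) - a * Real.log a with hD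
  have heq : flog (((a+1 : ℕ) : ℝ) / n) - flog ((a : ℝ) / n) = (D - Real.log n) / n := by
    rw [flog_nat_div (a+1) n hn0, flog_nat_div a n hn0]
    push_cast
    ring
  have hD0 : 0 ≤ D := by
    rcases Nat.eq_zero_or_pos a with h | h
    · subst h; simp [hD]
    · have ha1 : (1:ℝ) ≤ a := by exact_mod_cast h
      have : (a:ℝ) * Real.log a ≤ ((a:ℝ)+1) * Real.log ((a:ℝ)+1) := by
        apply mul_le_mul (by linarith) (Real.log_le_log (by linarith) (by linarith))
          (Real.log_nonneg ha1) (by linarith)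
      linarith
  have hD1 : D ≤ Real.log n + 1 := by
    rcases Nat.eq_zero_or_pos a with h | h
    · subst h; simp [hD]; linarith
    · have ha1 : (1:ℝ) ≤ a := by exact_mod_cast h
      have haR : (0:ℝ) < a := by linarith
      have hlog1 : Real.log ((a:ℝ)+1) ≤ Real.log n := by
        apply Real.log_le_log (by linarith)
        have : ((a:ℕ):ℝ) + 1 ≤ (n:ℝ) := by exact_mod_cast ha
        linarith
      have hlog2 : Real.log ((a:ℝ)+1) - Real.log a ≤ 1 / a := by
        rw [← Real.log_div (by linarith) (by linarith)]
        have := Real.log_le_sub_one_of_pos (x := ((a:ℝ)+1)/a) (by positivity)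
        have heq2 : ((a:ℝ)+1)/a - 1 = 1/a := by field_simp; ring
        linarith
      have : D = Real.log ((a:ℝ)+1) + a * (Real.log ((a:ℝ)+1) - Real.log a) := by
        rw [hD]; ring
      have h3 : (a:ℝ) * (Real.log ((a:ℝ)+1) - Real.log a) ≤ 1 := by
        have := mul_le_mul_of_nonneg_left hlog2 (le_of_lt haR)
        rw [mul_one_div, div_self (ne_of_gt haR)] at this
        exact this
      linarith
  rw [heq, abs_le]
  constructor
  · have h2 : -(2*Real.log n) ≤ D - Real.log n := by linarith
    calc -(2*Real.log n/n) = -(2*Real.log n)/n := by ring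
      _ ≤ (D - Real.log n)/n := by gcongr
  · have h2 : D - Real.log n ≤ 2*Real.log n := by linarith
    gcongr

lemma flog_multi {n : ℕ} (hn : 2 ≤ n) : ∀ a b : ℕ, a ≤ b → b ≤ n →
    |flog ((b:ℝ)/n) - flog ((a:ℝ)/n)| ≤ ((b - a : ℕ) : ℝ) * (2 * Real.log n / n) := by
  intro a b hab
  induction b, hab using Nat.le_induction with
  | base => intro _; simp
  | succ b hab ih =>
    intro hbn
    have h1 := flog_step hn (a := b) hbn
    have h2 := ih (by omega)
    have h3 : (b+1-a) = (b-a)+1 := by omega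
    have h4 := abs_sub_le (flog (((b+1:ℕ):ℝ)/n)) (flog ((b:ℝ)/n)) (flog ((a:ℝ)/n))
    have h5 : (((b+1:ℕ)):ℝ) = ((b:ℕ):ℝ) + 1 := by push_cast; ring
    rw [h3]
    push_cast at *
    linarith

lemma flog_pair {n kk : ℕ} (hn : 2 ≤ n) {a b : ℕ} (ha : a ≤ n) (hb : b ≤ n)
    (h1 : a ≤ b + kk) (h2 : b ≤ a + kk) :
    |flog ((a:ℝ)/n) - flog ((b:ℝ)/n)| ≤ (kk:ℝ) * (2 * Real.log n / n) := by
  have hn0 : 0 < n := by omega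
  have hstep : 0 ≤ 2 * Real.log n / n := by
    have : 0 ≤ Real.log n := Real.log_nonneg (by exact_mod_cast hn0)
    positivity
  rcases le_total a b with h | h
  · rw [abs_sub_comm]
    calc |flog ((b:ℝ)/n) - flog ((a:ℝ)/n)| ≤ ((b - a : ℕ) : ℝ) * (2 * Real.log n / n) :=
          flog_multi hn a b h hb
      _ ≤ (kk:ℝ) * (2 * Real.log n / n) := by
          apply mul_le_mul_of_nonneg_right _ hstep
          exact_mod_cast Nat.sub_le_iff_le_add.mpr (by omega)
  · calc |flog ((a:ℝ)/n) - flog ((b:ℝ)/n)| ≤ ((a - b : ℕ) : ℝ) * (2 * Real.log n / n) :=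
          flog_multi hn b a h ha
      _ ≤ (kk:ℝ) * (2 * Real.log n / n) := by
          apply mul_le_mul_of_nonneg_right _ hstep
          exact_mod_cast Nat.sub_le_iff_le_add.mpr (by omega)

lemma card_filter_le_add {n : ℕ} {P Q : ℕ → Prop} [DecidablePred P] [DecidablePred Q]
    (B : Finset ℕ) (h : ∀ j' ∈ Finset.range n, j' ∉ B → (P j' ↔ Q j')) :
    ((Finset.range n).filter P).card ≤ ((Finset.range n).filter Q).card + B.card := by
  have hsub : (Finset.range n).filter P ⊆ ((Finset.range n).filter Q) ∪ B := by
    intro j' hj'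
    simp only [Finset.mem_filter, Finset.mem_union] at *
    by_cases hB : j' ∈ B
    · exact Or.inr hB
    · exact Or.inl ⟨hj'.1, (h j' hj'.1 hB).mp hj'.2⟩
  calc _ ≤ (((Finset.range n).filter Q) ∪ B).card := Finset.card_le_card hsub
    _ ≤ _ := Finset.card_union_le _ _


namespace GibbsEntropy
variable {A : Type*} [Fintype A] [DecidableEq A]

lemma empEnt_osc {n k : ℕ} (hn : 2 ≤ n) (hk : 1 ≤ k) (hkn : k ≤ n)
    (x y : ℕ → A) (j : ℕ) (hj : j < n)
    (hxy : ∀ m, m < n → m ≠ j → x m = y m) :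
    |empEnt n k x - empEnt n k y| ≤ 2 * k * (Fintype.card A : ℝ) ^ k * Real.log n / n := by
  have hn0 : 0 < n := by omega
  have hnR : (0:ℝ) < n := by exact_mod_cast hn0
  set B : Finset ℕ := (Finset.range k).image (fun i => (j + n - i) % n) with hB
  have hBcard : B.card ≤ k := le_trans Finset.card_image_le (by simp)
  -- off B, windows agree
  have hwin : ∀ j' ∈ Finset.range n, j' ∉ B → ∀ i : Fin k, x ((j' + i.val) % n) = y ((j' + i.val) % n) := by
    intro j' hj' hjB i
    have hj'n : j' < n := Finset.mem_range.mp hj'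
    have hne : (j' + i.val) % n ≠ j := by
      intro heq
      apply hjB
      rw [hB, Finset.mem_image]
      refine ⟨i.val, Finset.mem_range.mpr i.isLt, ?_⟩
      have hik : i.val ≤ n := le_of_lt (lt_of_lt_of_le i.isLt hkn)
      calc (j + n - i.val) % n = ((j' + i.val) % n + n - i.val) % n := by rw [heq]
        _ = ((j' + i.val) % n + (n - i.val)) % n := by congr 1; omega
        _ = ((j' + i.val) + (n - i.val)) % n := Nat.mod_add_mod _ _ _
        _ = (j' + n) % n := by congr 1; omega
        _ = j' % n := Nat.add_mod_right _ _
        _ = j' := Nat.mod_eq_of_lt hj'n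
    exact hxy _ (Nat.mod_lt _ hn0) hne
  -- count comparison per word
  have hcount : ∀ w : Fin k → A,
      |flog (empFreq n k x w) - flog (empFreq n k y w)| ≤ (k:ℝ) * (2 * Real.log n / n) := by
    intro w
    classical
    have hiff : ∀ j' ∈ Finset.range n, j' ∉ B →
        ((∀ i : Fin k, x ((j' + i.val) % n) = w i) ↔ (∀ i : Fin k, y ((j' + i.val) % n) = w i)) := by
      intro j' hj' hjB
      constructor
      · intro h i; rw [← hwin j' hj' hjB i]; exact h i
      · intro h i; rw [hwin j' hj' hjB i]; exact h i
    set cx := ((Finset.range n).filter (fun j => ∀ i : Fin k, x ((j + i.val) % n) = w i)).card with hcx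
    set cy := ((Finset.range n).filter (fun j => ∀ i : Fin k, y ((j + i.val) % n) = w i)).card with hcy
    have h1 : cx ≤ cy + k :=
      le_trans (card_filter_le_add B hiff) (by omega)
    have h2 : cy ≤ cx + k :=
      le_trans (card_filter_le_add B (fun j' hj' hjB => (hiff j' hj' hjB).symm)) (by omega)
    have hxle : cx ≤ n := le_trans (Finset.card_filter_le _ _) (by simp)
    have hyle : cy ≤ n := le_trans (Finset.card_filter_le _ _) (by simp)
    have hfx : empFreq n k x w = (cx : ℝ) / n := rfl
    have hfy : empFreq n k y w = (cy : ℝ) / n := rfl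
    rw [hfx, hfy]
    exact flog_pair hn hxle hyle h1 h2
  -- sum up
  have hsum : empEnt n k x - empEnt n k y
      = ∑ w : Fin k → A, (flog (empFreq n k y w) - flog (empFreq n k x w)) := by
    simp only [empEnt, blockEnt, flog, Finset.sum_sub_distrib]
    ring
  rw [hsum]
  calc |∑ w : Fin k → A, (flog (empFreq n k y w) - flog (empFreq n k x w))|
      ≤ ∑ w : Fin k → A, |flog (empFreq n k y w) - flog (empFreq n k x w)| :=
        Finset.abs_sum_le_sum_abs _ _
    _ ≤ ∑ _w : Fin k → A, (k:ℝ) * (2 * Real.log n / n) := by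
        apply Finset.sum_le_sum
        intro w _
        rw [abs_sub_comm]
        exact hcount w
    _ = (Fintype.card A : ℝ) ^ k * ((k:ℝ) * (2 * Real.log n / n)) := by
        rw [Finset.sum_const, Finset.card_univ]
        simp [Fintype.card_fun]
    _ = 2 * k * (Fintype.card A : ℝ) ^ k * Real.log n / n := by ring

end GibbsEntropy
end AuxOsc

open GibbsEntropy

theorem statement_8 {A : Type*} [Fintype A] [DecidableEq A] (hA : 2 ≤ Fintype.card A)
    (n k : ℕ) (hn : 2 ≤ n) (hk : 1 ≤ k) (hkn : k ≤ n) (j : Fin n) (s : Fin n → A) (b : A) :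
    |empEnt n k (fun i => s ⟨i % n, Nat.mod_lt i (by omega)⟩) -
        empEnt n k (fun i => Function.update s j b ⟨i % n, Nat.mod_lt i (by omega)⟩)| ≤
      2 * k * (Fintype.card A : ℝ) ^ k * Real.log n / n := by
  apply empEnt_osc hn hk hkn _ _ j.val j.isLt
  intro m hm hmj
  have hmn : m % n = m := Nat.mod_eq_of_lt hm
  have hne : (⟨m % n, Nat.mod_lt m (by omega)⟩ : Fin n) ≠ j := by
    intro h
    exact hmj (by rw [← hmn]; exact congrArg Fin.val h)
  exact (Function.update_of_ne hne b s).symm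
end

section
/- Let μ_φ be the Gibbs measure of a Lipschitz potential φ with pressure 0. There exist constants C₁, C₂ > 0 and t₀ > 0 such that for every n ≥ 1 and every t > t₀, (μ_φ ⊗ μ_φ){(x,y) : (1/n) log W_n(x,y) > h(μ_φ) + t} ≤ C₁ e^{−C₂ n t²}. -/
open MeasureTheory Finset
open scoped ENNReal

open GibbsEntropy



set_option linter.unusedSectionVars false

section Aux

variable {A : Type*} [Fintype A] [DecidableEq A]

lemma aux_shift_iter (k : ℕ) (x : ℕ → A) (i : ℕ) : (shift^[k] x) i = x (i + k) := by
  induction k generalizing x i with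
  | zero => rfl
  | succ k ih =>
    rw [Function.iterate_succ_apply, ih]
    show x (i + k + 1) = x (i + (k + 1))
    congr 1

/-- tail condition set: coordinates `m, …, m+n-1` spell out `w`. -/
def auxTail {A : Type*} {n : ℕ} (m : ℕ) (w : Fin n → A) : Set (ℕ → A) :=
  {y | ∀ l : Fin n, y (m + l.val) = w l}

/-- `w` does not occur at positions `i*n` for `i = 1, …, r`. -/
def auxAvoid {A : Type*} (n : ℕ) (w : Fin n → A) (r : ℕ) : Set (ℕ → A) :=
  {y | ∀ i ∈ Finset.Icc 1 r, ∃ l : Fin n, y (i * n + l.val) ≠ w l}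

variable [MeasurableSpace A] [MeasurableSingletonClass A]

lemma aux_meas_eqs {ι : Type*} [Fintype ι] (g : ι → ℕ) (v : ι → A) :
    MeasurableSet {y : ℕ → A | ∀ i, y (g i) = v i} := by
  have : {y : ℕ → A | ∀ i, y (g i) = v i} = ⋂ i, (fun y : ℕ → A => y (g i)) ⁻¹' {v i} := by
    ext y; simp [Set.mem_iInter]
  rw [this]
  exact MeasurableSet.iInter fun i => (measurable_pi_apply _) (measurableSet_singleton _)

lemma aux_meas_cyl {k : ℕ} (w : Fin k → A) : MeasurableSet (cylinder w) :=
  aux_meas_eqs (fun i : Fin k => i.val) w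

lemma aux_meas_tail {n : ℕ} (m : ℕ) (w : Fin n → A) : MeasurableSet (auxTail m w) :=
  aux_meas_eqs (fun l : Fin n => m + l.val) w

lemma aux_meas_avoid (n : ℕ) (w : Fin n → A) (r : ℕ) : MeasurableSet (auxAvoid n w r) := by
  have h : auxAvoid n w r =
      ⋂ i ∈ Finset.Icc 1 r, ⋃ l : Fin n, ((fun y : ℕ → A => y (i * n + l.val)) ⁻¹' {w l})ᶜ := by
    ext y
    simp [auxAvoid, Set.mem_iInter, Set.mem_iUnion]
  rw [h]
  refine MeasurableSet.biInter (Finset.Icc 1 r : Finset ℕ).countable_toSet fun i _ => ?_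
  exact MeasurableSet.iUnion fun l =>
    ((measurable_pi_apply _) (measurableSet_singleton _)).compl

lemma aux_cyl_disj {k : ℕ} {u v : Fin k → A} (huv : u ≠ v) :
    Disjoint (cylinder u) (cylinder v) := by
  rw [Set.disjoint_left]
  intro y hyu hyv
  exact huv (funext fun i => (hyu i).symm.trans (hyv i))

end Aux

section Aux2
set_option maxHeartbeats 800000

variable {A : Type*} [Fintype A] [DecidableEq A] [MeasurableSpace A] [MeasurableSingletonClass A]

/-- Decomposition of a set determined by coordinates `< m` into cylinders. -/
lemma aux_decomp (μ : Measure (ℕ → A)) {m : ℕ} (hm : 1 ≤ m) (D : Set (ℕ → A))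
    (hD : ∀ x y : ℕ → A, (∀ i, i < m → x i = y i) → x ∈ D → y ∈ D)
    (S : Set (ℕ → A)) (hS : MeasurableSet S) :
    ∃ T : Finset (Fin m → A),
      μ D = ∑ u ∈ T, μ (cylinder u) ∧ μ (D ∩ S) = ∑ u ∈ T, μ (cylinder u ∩ S) := by
  classical
  set ext : (Fin m → A) → (ℕ → A) := fun u i => if h : i < m then u ⟨i, h⟩ else u ⟨0, hm⟩ with hext
  set T : Finset (Fin m → A) := Finset.univ.filter (fun u => ext u ∈ D) with hT
  have hrepr : D = ⋃ u ∈ T, cylinder u := by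
    ext y
    constructor
    · intro hy
      refine Set.mem_iUnion₂.mpr ⟨fun i : Fin m => y i.val, ?_, fun i => rfl⟩
      · simp only [hT, Finset.mem_filter, Finset.mem_univ, true_and]
        refine hD y _ (fun i hi => ?_) hy
        simp [hext, hi]
    · intro hy
      obtain ⟨u, huT, hyu⟩ := Set.mem_iUnion₂.mp hy
      simp only [hT, Finset.mem_filter, Finset.mem_univ, true_and] at huT
      refine hD (ext u) y (fun i hi => ?_) huT
      have := hyu ⟨i, hi⟩
      simp [hext, hi, this.symm]
  have hdisj : (T : Set (Fin m → A)).PairwiseDisjoint (cylinder (A := A)) :=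
    fun u _ v _ huv => aux_cyl_disj huv
  have hdisj2 : (T : Set (Fin m → A)).PairwiseDisjoint (fun u => cylinder (A := A) u ∩ S) :=
    fun u hu v hv huv => ((aux_cyl_disj huv).mono Set.inter_subset_left) Set.inter_subset_left
  refine ⟨T, ?_, ?_⟩
  · rw [hrepr]
    exact measure_biUnion_finset hdisj (fun u _ => aux_meas_cyl u)
  · have : D ∩ S = ⋃ u ∈ T, (cylinder u ∩ S) := by
      rw [hrepr]; ext y
      simp only [Set.mem_inter_iff, Set.mem_iUnion]
      tauto
    rw [this]
    exact measure_biUnion_finset hdisj2 (fun u _ => (aux_meas_cyl u).inter hS)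

lemma aux_measure_inter_ge (μ : Measure (ℕ → A)) [IsProbabilityMeasure μ] {m : ℕ} (hm : 1 ≤ m)
    (D : Set (ℕ → A)) (hD : ∀ x y : ℕ → A, (∀ i, i < m → x i = y i) → x ∈ D → y ∈ D)
    (S : Set (ℕ → A)) (hS : MeasurableSet S) (κ c : ℝ)
    (hcyl : ∀ u : Fin m → A, κ * (μ (cylinder u)).toReal * c ≤ (μ (cylinder u ∩ S)).toReal) :
    κ * (μ D).toReal * c ≤ (μ (D ∩ S)).toReal := by
  obtain ⟨T, h1, h2⟩ := aux_decomp μ hm D hD S hS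
  rw [h1, h2, ENNReal.toReal_sum (fun u _ => measure_ne_top μ _),
    ENNReal.toReal_sum (fun u _ => measure_ne_top μ _), Finset.mul_sum, Finset.sum_mul]
  exact Finset.sum_le_sum fun u _ => hcyl u

private lemma aux_sum_range_add (f : ℕ → ℝ) (m n : ℕ) :
    ∑ i ∈ Finset.range (m + n), f i
      = ∑ i ∈ Finset.range m, f i + ∑ i ∈ Finset.range n, f (m + i) := by
  induction n with
  | zero => simp
  | succ n ih =>
    have : m + (n + 1) = (m + n) + 1 := by omega
    rw [this, Finset.sum_range_succ, ih, Finset.sum_range_succ, add_assoc]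

/-- cylinder on `u` followed by tail `w` equals cylinder on `Fin.append u w`. -/
lemma aux_cyl_append {m n : ℕ} (u : Fin m → A) (w : Fin n → A) :
    cylinder u ∩ auxTail m w = cylinder (Fin.append u w) := by
  ext y
  constructor
  · rintro ⟨hu, ht⟩ i
    rcases lt_or_ge i.val m with h | h
    · have : i = Fin.castAdd n ⟨i.val, h⟩ := by apply Fin.ext; rfl
      rw [this, Fin.append_left]
      exact hu ⟨i.val, h⟩
    · have hl : i.val - m < n := by omega
      have : i = Fin.natAdd m ⟨i.val - m, hl⟩ := by
        apply Fin.ext; show i.val = m + (i.val - m); omega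
      rw [this, Fin.append_right]
      have := ht ⟨i.val - m, hl⟩
      rw [← this]
      rfl
  · intro h
    constructor
    · intro i
      have := h (Fin.castAdd n i)
      rwa [Fin.append_left] at this
    · intro l
      have := h (Fin.natAdd m l)
      rwa [Fin.append_right] at this

end Aux2

section Aux3
set_option maxHeartbeats 1000000

variable {A : Type*} [Fintype A] [DecidableEq A] [MeasurableSpace A] [MeasurableSingletonClass A]

/-- Gibbs quasi-independence of consecutive blocks. -/
lemma aux_gibbs_prod (φ : (ℕ → A) → ℝ) (μ : Measure (ℕ → A)) {C : ℝ} (hC : 1 < C)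
    (hG : ∀ (x : ℕ → A) (m : ℕ), 1 ≤ m →
      C⁻¹ * Real.exp (∑ i ∈ Finset.range m, φ (shift^[i] x)) ≤
          (μ (cylinder (fun i : Fin m => x i.val))).toReal ∧
      (μ (cylinder (fun i : Fin m => x i.val))).toReal ≤
          C * Real.exp (∑ i ∈ Finset.range m, φ (shift^[i] x)))
    {m n : ℕ} (hm : 1 ≤ m) (hn : 1 ≤ n) (u : Fin m → A) (w : Fin n → A) :
    C⁻¹ ^ 3 * (μ (cylinder u)).toReal * (μ (cylinder w)).toReal ≤
      (μ (cylinder u ∩ auxTail m w)).toReal := by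
  set x : ℕ → A := fun i => if h : i < m + n then Fin.append u w ⟨i, h⟩ else u ⟨0, hm⟩ with hx
  have hxmn : (fun i : Fin (m + n) => x i.val) = Fin.append u w := by
    funext i; simp only [hx, i.isLt, dif_pos]
  have hxu : (fun i : Fin m => x i.val) = u := by
    funext i
    have h1 : (i : ℕ) < m + n := lt_of_lt_of_le i.isLt (Nat.le_add_right _ _)
    simp only [hx, h1, dif_pos]
    have : (⟨(i : ℕ), h1⟩ : Fin (m + n)) = Fin.castAdd n i := by apply Fin.ext; rfl
    rw [this, Fin.append_left]
  have hxw : (fun l : Fin n => (shift^[m] x) l.val) = w := by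
    funext l
    rw [aux_shift_iter]
    have h1 : l.val + m < m + n := by omega
    simp only [hx, h1, dif_pos]
    have : (⟨l.val + m, h1⟩ : Fin (m + n)) = Fin.natAdd m l := by
      apply Fin.ext; show l.val + m = m + l.val; omega
    rw [this, Fin.append_right]
  have hsum : ∑ i ∈ Finset.range (m + n), φ (shift^[i] x)
      = (∑ i ∈ Finset.range m, φ (shift^[i] x))
        + ∑ i ∈ Finset.range n, φ (shift^[i] (shift^[m] x)) := by
    rw [aux_sum_range_add]
    congr 1
    refine Finset.sum_congr rfl fun i _ => ?_
    congr 1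
    rw [← Function.iterate_add_apply]
    congr 1
    omega
  have hlow := (hG x (m + n) (by omega)).1
  rw [hxmn, hsum, Real.exp_add] at hlow
  have hu2 := (hG x m hm).2
  rw [hxu] at hu2
  have hw2 := (hG (shift^[m] x) n hn).2
  rw [hxw] at hw2
  rw [← aux_cyl_append] at hlow
  set e1 := Real.exp (∑ i ∈ Finset.range m, φ (shift^[i] x)) with he1
  set e2 := Real.exp (∑ i ∈ Finset.range n, φ (shift^[i] (shift^[m] x))) with he2
  have hC0 : (0:ℝ) < C := lt_trans one_pos hC
  have hc0 : (0:ℝ) < C⁻¹ := inv_pos.mpr hC0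
  have hcC : C⁻¹ * C = 1 := inv_mul_cancel₀ (ne_of_gt hC0)
  have h1 : (μ (cylinder u)).toReal * (μ (cylinder w)).toReal ≤ (C * e1) * (C * e2) :=
    mul_le_mul hu2 hw2 ENNReal.toReal_nonneg
      (le_of_lt (mul_pos hC0 (Real.exp_pos _)))
  have h2 : C⁻¹ ^ 3 * ((C * e1) * (C * e2)) = C⁻¹ * (e1 * e2) := by
    have : C⁻¹ ^ 3 * ((C * e1) * (C * e2)) = (C⁻¹ * C) * ((C⁻¹ * C) * (C⁻¹ * (e1 * e2))) := by
      ring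
    rw [this, hcC]; ring
  calc C⁻¹ ^ 3 * (μ (cylinder u)).toReal * (μ (cylinder w)).toReal
      = C⁻¹ ^ 3 * ((μ (cylinder u)).toReal * (μ (cylinder w)).toReal) := by ring
    _ ≤ C⁻¹ ^ 3 * ((C * e1) * (C * e2)) := by
        apply mul_le_mul_of_nonneg_left h1 (le_of_lt (pow_pos hc0 3))
    _ = C⁻¹ * (e1 * e2) := h2
    _ ≤ (μ (cylinder u ∩ auxTail m w)).toReal := hlow

/-- Lower bound for the measure of any cylinder. -/
lemma aux_cyl_lower (φ : (ℕ → A) → ℝ) (μ : Measure (ℕ → A)) {C B : ℝ} (hC : 1 < C)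
    (hG : ∀ (x : ℕ → A) (m : ℕ), 1 ≤ m →
      C⁻¹ * Real.exp (∑ i ∈ Finset.range m, φ (shift^[i] x)) ≤
          (μ (cylinder (fun i : Fin m => x i.val))).toReal ∧
      (μ (cylinder (fun i : Fin m => x i.val))).toReal ≤
          C * Real.exp (∑ i ∈ Finset.range m, φ (shift^[i] x)))
    (hB : ∀ x : ℕ → A, -B ≤ φ x) {n : ℕ} (hn : 1 ≤ n) (w : Fin n → A) :
    C⁻¹ * Real.exp (-(n : ℝ) * B) ≤ (μ (cylinder w)).toReal := by
  set x : ℕ → A := fun i => if h : i < n then w ⟨i, h⟩ else w ⟨0, hn⟩ with hx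
  have hxw : (fun i : Fin n => x i.val) = w := by
    funext i; simp only [hx, i.isLt, dif_pos]
  have hlow := (hG x n hn).1
  rw [hxw] at hlow
  refine le_trans ?_ hlow
  have hC0 : (0:ℝ) < C := lt_trans one_pos hC
  apply mul_le_mul_of_nonneg_left _ (le_of_lt (inv_pos.mpr hC0))
  apply Real.exp_le_exp.mpr
  calc -(n:ℝ) * B = ∑ _i ∈ Finset.range n, (-B) := by
        rw [Finset.sum_const, Finset.card_range, nsmul_eq_mul]; ring
    _ ≤ ∑ i ∈ Finset.range n, φ (shift^[i] x) :=
        Finset.sum_le_sum fun i _ => hB _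

/-- Cylinders of a fixed length partition the space. -/
lemma aux_sum_cyl (μ : Measure (ℕ → A)) [IsProbabilityMeasure μ] (n : ℕ) :
    ∑ w : Fin n → A, μ (cylinder w) = 1 := by
  have huniv : (⋃ w : Fin n → A, cylinder w) = Set.univ := by
    ext y
    simp only [Set.mem_iUnion, Set.mem_univ, iff_true]
    exact ⟨fun i => y i.val, fun i => rfl⟩
  have := measure_iUnion (μ := μ)
    (fun w w' hww' => aux_cyl_disj hww') (fun w : Fin n → A => aux_meas_cyl w)
  rw [huniv, measure_univ, tsum_fintype] at this
  exact this.symm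

end Aux3

section Aux4
set_option maxHeartbeats 1000000

variable {A : Type*} [Fintype A] [DecidableEq A] [MeasurableSpace A] [MeasurableSingletonClass A]

lemma aux_avoid_split (n : ℕ) (w : Fin n → A) (r : ℕ) :
    auxAvoid n w (r + 1) = auxAvoid n w r ∩ (auxTail ((r + 1) * n) w)ᶜ := by
  ext y
  simp only [auxAvoid, auxTail, Set.mem_setOf_eq, Set.mem_inter_iff, Set.mem_compl_iff,
    Finset.mem_Icc]
  constructor
  · intro H
    refine ⟨fun i hi => H i ⟨hi.1, by omega⟩, fun hall => ?_⟩
    obtain ⟨l, hl⟩ := H (r + 1) ⟨by omega, le_refl _⟩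
    exact hl (hall l)
  · rintro ⟨H1, H2⟩ i hi
    rcases Nat.lt_or_ge i (r + 1) with h | h
    · exact H1 i ⟨hi.1, by omega⟩
    · have : i = r + 1 := by omega
      subst this
      by_contra hcon
      push_neg at hcon
      exact H2 fun l => hcon l

lemma aux_avoid_determined (n : ℕ) (hn : 1 ≤ n) (w : Fin n → A) (r : ℕ)
    (x y : ℕ → A) (hagree : ∀ i, i < (r + 1) * n → x i = y i)
    (hx : x ∈ auxAvoid n w r) : y ∈ auxAvoid n w r := by
  intro i hi
  obtain ⟨l, hl⟩ := hx i hi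
  refine ⟨l, ?_⟩
  have hin : i ≤ r := (Finset.mem_Icc.mp hi).2
  have hlt : i * n + l.val < (r + 1) * n := by
    have h1 : i * n ≤ r * n := Nat.mul_le_mul_right n hin
    have h2 : l.val < n := l.isLt
    calc i * n + l.val < i * n + n := by omega
      _ ≤ r * n + n := by omega
      _ = (r + 1) * n := by ring
  rw [← hagree _ hlt]
  exact hl

lemma aux_avoid_rec (μ : Measure (ℕ → A)) [IsProbabilityMeasure μ] {n : ℕ} (hn : 1 ≤ n)
    (w : Fin n → A) (κ : ℝ) (hκ0 : 0 ≤ κ) (hκ1 : κ * (μ (cylinder w)).toReal ≤ 1)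
    (hGib : ∀ (m : ℕ), 1 ≤ m → ∀ u : Fin m → A,
      κ * (μ (cylinder u)).toReal * (μ (cylinder w)).toReal ≤
        (μ (cylinder u ∩ auxTail m w)).toReal)
    (r : ℕ) :
    (μ (auxAvoid n w r)).toReal ≤ (1 - κ * (μ (cylinder w)).toReal) ^ r := by
  induction r with
  | zero =>
    have h0 : auxAvoid n w 0 = Set.univ := by
      ext y; simp [auxAvoid]
    rw [h0, measure_univ, pow_zero]
    simp
  | succ r ih =>
    set m := (r + 1) * n with hmdef
    have hm : 1 ≤ m := by
      have := Nat.mul_le_mul (Nat.one_le_iff_ne_zero.mpr (by omega) : 1 ≤ r + 1) hn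
      simpa [hmdef] using this
    have hkey : κ * (μ (auxAvoid n w r)).toReal * (μ (cylinder w)).toReal ≤
        (μ (auxAvoid n w r ∩ auxTail m w)).toReal :=
      aux_measure_inter_ge μ hm (auxAvoid n w r)
        (fun x y hagree hx => aux_avoid_determined n hn w r x y hagree hx)
        (auxTail m w) (aux_meas_tail m w) κ _ (fun u => hGib m hm u)
    have hadd : (μ (auxAvoid n w r)).toReal =
        (μ (auxAvoid n w r ∩ auxTail m w)).toReal +
          (μ (auxAvoid n w r ∩ (auxTail m w)ᶜ)).toReal := by
      rw [← ENNReal.toReal_add (measure_ne_top μ _) (measure_ne_top μ _)]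
      congr 1
      rw [← Set.diff_eq]
      exact (measure_inter_add_diff _ (aux_meas_tail m w)).symm
    have hsplit := aux_avoid_split n w r
    have hmono : (0:ℝ) ≤ 1 - κ * (μ (cylinder w)).toReal := by linarith
    have hwp : (0:ℝ) ≤ κ * (μ (cylinder w)).toReal :=
      mul_nonneg hκ0 ENNReal.toReal_nonneg
    have havoid_nonneg : (0:ℝ) ≤ (μ (auxAvoid n w r)).toReal := ENNReal.toReal_nonneg
    have hstep : (μ (auxAvoid n w (r + 1))).toReal ≤
        (1 - κ * (μ (cylinder w)).toReal) * (μ (auxAvoid n w r)).toReal := by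
      rw [hsplit]
      nlinarith [hkey, hadd]
    calc (μ (auxAvoid n w (r + 1))).toReal
        ≤ (1 - κ * (μ (cylinder w)).toReal) * (μ (auxAvoid n w r)).toReal := hstep
      _ ≤ (1 - κ * (μ (cylinder w)).toReal) * (1 - κ * (μ (cylinder w)).toReal) ^ r :=
          mul_le_mul_of_nonneg_left ih hmono
      _ = (1 - κ * (μ (cylinder w)).toReal) ^ (r + 1) := by ring

end Aux4

section Aux5
set_option maxHeartbeats 1000000

/-- The final elementary real estimate. -/
lemma aux_final {C B h t : ℝ} {n : ℕ} (hC : 1 < C) (hB : 0 ≤ B) (hh : -B ≤ h)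
    (hn : 1 ≤ n) (ht : 4 * B + 4 < t) :
    (1 - C⁻¹ ^ 4 * Real.exp (-(n : ℝ) * B)) ^ Nat.floor (Real.exp ((n : ℝ) * (h + t)) / (n : ℝ))
      ≤ Real.exp 2 * Real.exp (-(C⁻¹ ^ 4 / 54) * (n : ℝ) * t ^ 2) := by
  have hC0 : (0:ℝ) < C := lt_trans one_pos hC
  have hi1 : C⁻¹ ≤ 1 := by
    rw [inv_le_one_iff₀]; right; exact le_of_lt hC
  have hi0 : (0:ℝ) < C⁻¹ := inv_pos.mpr hC0
  set c : ℝ := C⁻¹ ^ 4 with hc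
  have hc0 : 0 < c := pow_pos hi0 4
  have hc1 : c ≤ 1 := by
    calc c ≤ 1 ^ 4 := pow_le_pow_left₀ (le_of_lt hi0) hi1 4
      _ = 1 := one_pow 4
  set N : ℝ := (n : ℝ) with hN
  have hN1 : 1 ≤ N := by rw [hN]; exact_mod_cast hn
  have hN0 : 0 < N := lt_of_lt_of_le one_pos hN1
  set ε : ℝ := c * Real.exp (-N * B) with hε
  have hε0 : 0 < ε := mul_pos hc0 (Real.exp_pos _)
  have hε1 : ε ≤ 1 := by
    have hexp1 : Real.exp (-N * B) ≤ 1 := Real.exp_le_one_iff.mpr (by nlinarith)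
    nlinarith [Real.exp_pos (-N * B)]
  set q : ℝ := N * (h + t) with hq
  set R : ℕ := Nat.floor (Real.exp q / N) with hR
  have ht4 : 4 < t := by linarith
  set s : ℝ := t - 2 * B with hs
  have hst : t / 2 ≤ s := by simp only [hs]; linarith
  have hs0 : 0 < s := by linarith
  clear_value s R q ε N c
  -- cube bound : (N*s)^3 / 27 ≤ exp (N*s)
  have hcube : (N * s) ^ 3 / 27 ≤ Real.exp (N * s) := by
    have h1 : N * s / 3 + 1 ≤ Real.exp (N * s / 3) := Real.add_one_le_exp _
    have h2 : (N * s / 3 + 1) ^ 3 ≤ Real.exp (N * s / 3) ^ 3 :=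
      pow_le_pow_left₀ (by positivity) h1 3
    have h3 : Real.exp (N * s / 3) ^ 3 = Real.exp (N * s) := by
      rw [← Real.exp_nat_mul]
      congr 1
      push_cast
      ring
    have h4 : (N * s) ^ 3 / 27 ≤ (N * s / 3 + 1) ^ 3 := by
      have hu : (0:ℝ) ≤ N * s := le_of_lt (mul_pos hN0 hs0)
      nlinarith [hu, sq_nonneg (N * s)]
    linarith
  -- main quantity bound
  have hX : c / 54 * N * t ^ 2 ≤ ε * (Real.exp q / N) := by
    have key : c / 54 * N * t ^ 2 * N ≤ ε * Real.exp q := by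
      have e1 : ε * Real.exp q = c * Real.exp (-N * B + q) := by
        rw [hε, Real.exp_add]; ring
      have e2 : N * s ≤ -N * B + q := by
        simp only [hq, hs]; nlinarith
      have e3 : c * Real.exp (N * s) ≤ c * Real.exp (-N * B + q) :=
        mul_le_mul_of_nonneg_left (Real.exp_le_exp.mpr e2) (le_of_lt hc0)
      have e4 : c * ((N * s) ^ 3 / 27) ≤ c * Real.exp (N * s) :=
        mul_le_mul_of_nonneg_left hcube (le_of_lt hc0)
      have hs3 : (t / 2) ^ 3 ≤ s ^ 3 := pow_le_pow_left₀ (by linarith) hst 3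
      have f1 : t ^ 2 ≤ 2 * s ^ 3 := by
        nlinarith [hs3, mul_nonneg (sq_nonneg t) (le_of_lt (sub_pos.mpr ht4))]
      have f2 : t ^ 2 ≤ 2 * N * s ^ 3 := by nlinarith [pow_pos hs0 3]
      have f3 : c * (N ^ 2 * t ^ 2) ≤ c * (N ^ 2 * (2 * N * s ^ 3)) :=
        mul_le_mul_of_nonneg_left
          (mul_le_mul_of_nonneg_left f2 (sq_nonneg N)) (le_of_lt hc0)
      have e5 : c / 54 * N * t ^ 2 * N ≤ c * ((N * s) ^ 3 / 27) := by
        calc c / 54 * N * t ^ 2 * N = c * (N ^ 2 * t ^ 2) / 54 := by ring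
          _ ≤ c * (N ^ 2 * (2 * N * s ^ 3)) / 54 := by linarith
          _ = c * ((N * s) ^ 3 / 27) := by ring
      rw [e1]
      exact le_trans (le_trans e5 e4) e3
    rw [show ε * (Real.exp q / N) = ε * Real.exp q / N from (mul_div_assoc _ _ _).symm]
    exact (le_div_iff₀ hN0).mpr key
  -- conclusion
  have g1 : 1 - ε ≤ Real.exp (-ε) := by linarith [Real.add_one_le_exp (-ε)]
  have g2 : (1 - ε) ^ R ≤ Real.exp (-ε) ^ R := pow_le_pow_left₀ (by linarith) g1 R
  have g3 : Real.exp (-ε) ^ R = Real.exp ((R : ℝ) * -ε) := (Real.exp_nat_mul _ R).symm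
  have hfl : Real.exp q / N - 1 < (R : ℝ) := by rw [hR]; exact Nat.sub_one_lt_floor _
  have g4 : (R : ℝ) * -ε ≤ 2 + -(c / 54) * N * t ^ 2 := by
    have h5 : ε * (Real.exp q / N) ≤ ε * ((R : ℝ) + 1) :=
      mul_le_mul_of_nonneg_left (by linarith) (le_of_lt hε0)
    nlinarith [hX, h5]
  calc (1 - ε) ^ R ≤ Real.exp ((R : ℝ) * -ε) := by rw [← g3]; exact g2
    _ ≤ Real.exp (2 + -(c / 54) * N * t ^ 2) := Real.exp_le_exp.mpr g4
    _ = Real.exp 2 * Real.exp (-(c / 54) * N * t ^ 2) := Real.exp_add _ _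

end Aux5


set_option maxHeartbeats 1600000 in
theorem statement_13 {A : Type*} [Fintype A] [DecidableEq A] [MeasurableSpace A] [MeasurableSingletonClass A]
    (hA : 2 ≤ Fintype.card A)
    (θ : ℝ) (hθ : θ ∈ Set.Ioo (0 : ℝ) 1)
    (φ : (ℕ → A) → ℝ) (hφ : LipFun θ φ)
    (μ : Measure (ℕ → A)) [IsProbabilityMeasure μ]
    (hσ : MeasurePreserving (shift (A := A)) μ μ)
    (hGibbs : IsGibbs φ μ) :
    ∃ C₁ C₂ t₀ : ℝ, 0 < C₁ ∧ 0 < C₂ ∧ 0 < t₀ ∧ ∀ n : ℕ, 1 ≤ n → ∀ t : ℝ, t₀ < t →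
      (μ.prod μ) {p : (ℕ → A) × (ℕ → A) |
          (((n : ℝ) * ((-∫ y, φ y ∂μ) + t) : ℝ) : EReal) < ENNReal.log (hitTime n p.1 p.2)} ≤
        ENNReal.ofReal (C₁ * Real.exp (-C₂ * n * t ^ 2)) := by
  classical
  have hAne : Nonempty A := Fintype.card_pos_iff.mp (by omega)
  obtain ⟨CL, hCL0, hLip⟩ := hφ
  obtain ⟨C, hC1, hG⟩ := hGibbs
  have hC0 : (0:ℝ) < C := lt_trans one_pos hC1
  have hCi0 : (0:ℝ) < C⁻¹ := inv_pos.mpr hC0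
  have hCi1 : C⁻¹ ≤ 1 := by rw [inv_le_one_iff₀]; right; exact le_of_lt hC1
  have hune : (Finset.univ : Finset A).Nonempty := Finset.univ_nonempty
  set M : ℝ := Finset.univ.sup' hune (fun a : A => |φ (fun _ => a)|) with hMdef
  have hM0 : 0 ≤ M :=
    le_trans (abs_nonneg _)
      (Finset.le_sup' (fun a : A => |φ (fun _ => a)|) (Finset.mem_univ (Classical.arbitrary A)))
  set B : ℝ := CL + M with hBdef
  have hB0 : 0 ≤ B := by rw [hBdef]; linarith
  have hBabs : ∀ x : ℕ → A, |φ x| ≤ B := by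
    intro x
    have h1 : |φ x - φ (fun _ => x 0)| ≤ CL * θ ^ 0 :=
      hLip 0 x (fun _ => x 0) (fun i hi => by rw [Nat.le_zero.mp hi])
    rw [pow_zero, mul_one] at h1
    have h2 : |φ (fun _ => x 0)| ≤ M :=
      Finset.le_sup' (fun a : A => |φ (fun _ => a)|) (Finset.mem_univ (x 0))
    calc |φ x| = |(φ x - φ (fun _ => x 0)) + φ (fun _ => x 0)| := by ring_nf
      _ ≤ |φ x - φ (fun _ => x 0)| + |φ (fun _ => x 0)| := abs_add_le _ _
      _ ≤ B := by rw [hBdef]; linarith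
  have hφlow : ∀ x : ℕ → A, -B ≤ φ x := fun x => (abs_le.mp (hBabs x)).1
  have hint : -B ≤ -∫ y, φ y ∂μ := by
    have h1 : ‖∫ y, φ y ∂μ‖ ≤ B * (μ Set.univ).toReal :=
      norm_integral_le_of_norm_le_const
        (Filter.Eventually.of_forall fun x => by rw [Real.norm_eq_abs]; exact hBabs x)
    rw [measure_univ, ENNReal.toReal_one, mul_one, Real.norm_eq_abs] at h1
    linarith [(abs_le.mp h1).1, (abs_le.mp h1).2]
  refine ⟨Real.exp 2, C⁻¹ ^ 4 / 54, 4 * B + 4, Real.exp_pos 2, by positivity, by linarith, ?_⟩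
  intro n hn t ht
  set q : ℝ := (n : ℝ) * ((-∫ y, φ y ∂μ) + t) with hq
  set R : ℕ := Nat.floor (Real.exp q / (n : ℝ)) with hR
  set κ : ℝ := C⁻¹ ^ 3 with hκ
  set ε : ℝ := C⁻¹ ^ 4 * Real.exp (-(n : ℝ) * B) with hε
  have hn0 : (0:ℝ) < (n : ℝ) := by exact_mod_cast Nat.lt_of_lt_of_le Nat.zero_lt_one hn
  -- inclusion of the event into a union of rectangles
  have hincl : {p : (ℕ → A) × (ℕ → A) | ((q : ℝ) : EReal) < ENNReal.log (hitTime n p.1 p.2)} ⊆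
      ⋃ w : Fin n → A, GibbsEntropy.cylinder w ×ˢ auxAvoid n w R := by
    rintro ⟨x, y⟩ hp
    simp only [Set.mem_setOf_eq] at hp
    refine Set.mem_iUnion.mpr ⟨fun i : Fin n => x i.val, Set.mem_prod.mpr ⟨fun i => rfl, ?_⟩⟩
    intro i hi
    by_contra hcon
    push_neg at hcon
    have hi' := Finset.mem_Icc.mp hi
    have hjge : 1 ≤ i * n := by
      have := Nat.mul_le_mul hi'.1 hn
      simpa using this
    have hWle : hitTime n x y ≤ ((i * n : ℕ) : ℝ≥0∞) :=
      iInf₂_le (i * n) ⟨hjge, fun l => hcon l⟩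
    have hreal : ((i * n : ℕ) : ℝ) ≤ Real.exp q := by
      have hfl : (R : ℝ) ≤ Real.exp q / (n : ℝ) := by
        rw [hR]; exact Nat.floor_le (by positivity)
      have h2 : (R : ℝ) * n ≤ Real.exp q := (le_div_iff₀ hn0).mp hfl
      have hiR : (i : ℝ) ≤ (R : ℝ) := by exact_mod_cast hi'.2
      have h3 : ((i * n : ℕ) : ℝ) ≤ (R : ℝ) * n := by
        push_cast
        exact mul_le_mul_of_nonneg_right hiR (le_of_lt hn0)
      linarith
    have hlog : ENNReal.log (hitTime n x y) ≤ ((q : ℝ) : EReal) := by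
      calc ENNReal.log (hitTime n x y) ≤ ENNReal.log ((i * n : ℕ) : ℝ≥0∞) :=
            ENNReal.log_monotone hWle
        _ ≤ ENNReal.log (ENNReal.ofReal (Real.exp q)) := by
            apply ENNReal.log_monotone
            rw [← ENNReal.ofReal_natCast]
            exact ENNReal.ofReal_le_ofReal hreal
        _ = ((Real.log (Real.exp q) : ℝ) : EReal) := ENNReal.log_ofReal_of_pos (Real.exp_pos q)
        _ = ((q : ℝ) : EReal) := by rw [Real.log_exp]
    exact absurd hp (not_lt.mpr hlog)
  -- per-word bound on the avoiding set
  have hone : ∀ w : Fin n → A, μ (auxAvoid n w R) ≤ ENNReal.ofReal ((1 - ε) ^ R) := by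
    intro w
    have hκ0 : (0:ℝ) ≤ κ := by rw [hκ]; positivity
    have hκle1 : κ ≤ 1 := by
      rw [hκ]
      calc C⁻¹ ^ 3 ≤ 1 ^ 3 := pow_le_pow_left₀ (le_of_lt hCi0) hCi1 3
        _ = 1 := one_pow 3
    have hμw1 : (μ (GibbsEntropy.cylinder w)).toReal ≤ 1 := by
      rw [← ENNReal.toReal_one]
      exact ENNReal.toReal_mono ENNReal.one_ne_top prob_le_one
    have hμw0 : 0 ≤ (μ (GibbsEntropy.cylinder w)).toReal := ENNReal.toReal_nonneg
    have hlow : C⁻¹ * Real.exp (-(n : ℝ) * B) ≤ (μ (GibbsEntropy.cylinder w)).toReal :=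
      aux_cyl_lower φ μ hC1 hG hφlow hn w
    have hrec := aux_avoid_rec μ hn w κ hκ0 (by nlinarith)
      (fun m hm u => aux_gibbs_prod φ μ hC1 hG hm hn u w) R
    have hεκ : ε ≤ κ * (μ (GibbsEntropy.cylinder w)).toReal := by
      have h4 := mul_le_mul_of_nonneg_left hlow hκ0
      calc ε = κ * (C⁻¹ * Real.exp (-(n : ℝ) * B)) := by rw [hε, hκ]; ring
        _ ≤ κ * (μ (GibbsEntropy.cylinder w)).toReal := h4
    have hε0 : 0 ≤ ε := by rw [hε]; positivity
    have hκμ1 : κ * (μ (GibbsEntropy.cylinder w)).toReal ≤ 1 := by nlinarith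
    have hmono : (1 - κ * (μ (GibbsEntropy.cylinder w)).toReal) ^ R ≤ (1 - ε) ^ R :=
      pow_le_pow_left₀ (by linarith) (by linarith) R
    have hfin : (μ (auxAvoid n w R)).toReal ≤ (1 - ε) ^ R := le_trans hrec hmono
    rw [← ENNReal.ofReal_toReal (measure_ne_top μ (auxAvoid n w R))]
    exact ENNReal.ofReal_le_ofReal hfin
  -- assembling
  have hdisj : Pairwise (Function.onFun Disjoint
      (fun w : Fin n → A => GibbsEntropy.cylinder w ×ˢ auxAvoid n w R)) := by
    intro w w' hne
    rw [Function.onFun, Set.disjoint_left]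
    rintro ⟨a, b⟩ ⟨h1, _⟩ ⟨h3, _⟩
    exact Set.disjoint_left.mp (aux_cyl_disj hne) h1 h3
  refine le_trans (measure_mono hincl) ?_
  calc (μ.prod μ) (⋃ w : Fin n → A, GibbsEntropy.cylinder w ×ˢ auxAvoid n w R)
      = ∑' w : Fin n → A, (μ.prod μ) (GibbsEntropy.cylinder w ×ˢ auxAvoid n w R) :=
        measure_iUnion hdisj (fun w => (aux_meas_cyl w).prod (aux_meas_avoid n w R))
    _ = ∑ w : Fin n → A, μ (GibbsEntropy.cylinder w) * μ (auxAvoid n w R) := by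
        rw [tsum_fintype]
        exact Finset.sum_congr rfl fun w _ => Measure.prod_prod _ _
    _ ≤ ∑ w : Fin n → A, μ (GibbsEntropy.cylinder w) * ENNReal.ofReal ((1 - ε) ^ R) :=
        Finset.sum_le_sum fun w _ => mul_le_mul_right (hone w) _
    _ = (∑ w : Fin n → A, μ (GibbsEntropy.cylinder w)) * ENNReal.ofReal ((1 - ε) ^ R) :=
        (Finset.sum_mul _ _ _).symm
    _ = ENNReal.ofReal ((1 - ε) ^ R) := by rw [aux_sum_cyl μ n, one_mul]
    _ ≤ ENNReal.ofReal (Real.exp 2 * Real.exp (-(C⁻¹ ^ 4 / 54) * (n : ℝ) * t ^ 2)) := by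
        apply ENNReal.ofReal_le_ofReal
        rw [hε, hR, hq]
        exact aux_final hC1 hB0 hint hn ht
end

section
/- Let μ_φ be the Gibbs measure of a Lipschitz potential φ with pressure 0. There exists a constant λ₂ > 0 (depending only on φ) such that for every n ∈ ℕ, every word a_0^{n−1} ∈ A^n and every v with 0 < v ≤ 1/2, one has μ_φ{y : τ_{[a_0^{n−1}]}(y) · μ_φ([a_0^{n−1}]) < v} ≤ 1 − e^{−λ₂ v} ≤ λ₂ v. -/
open MeasureTheory Finset
open scoped ENNReal

open GibbsEntropy

theorem statement_17 {A : Type*} [Fintype A] [DecidableEq A] [MeasurableSpace A] [MeasurableSingletonClass A]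
    (hA : 2 ≤ Fintype.card A)
    (θ : ℝ) (hθ : θ ∈ Set.Ioo (0 : ℝ) 1)
    (φ : (ℕ → A) → ℝ) (hφ : LipFun θ φ)
    (μ : Measure (ℕ → A)) [IsProbabilityMeasure μ]
    (hσ : MeasurePreserving (shift (A := A)) μ μ)
    (hGibbs : IsGibbs φ μ) :
    ∃ lam₂ : ℝ, 0 < lam₂ ∧ ∀ (n : ℕ) (w : Fin n → A) (v : ℝ), 0 < v → v ≤ 1 / 2 →
      μ {y | wordHitTime w y * μ (cylinder w) < ENNReal.ofReal v} ≤
          ENNReal.ofReal (1 - Real.exp (-lam₂ * v)) ∧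
        1 - Real.exp (-lam₂ * v) ≤ lam₂ * v := by
  have h4 : (0:ℝ) < Real.log 4 := Real.log_pos (by norm_num)
  refine ⟨Real.log 4, h4, ?_⟩
  intro n w v hv hv2
  -- key real inequality : v ≤ 1 - exp(-log4 · v) for 0 < v ≤ 1/2
  have hexp : v ≤ 1 - Real.exp (-(Real.log 4) * v) := by
    have hconv := convexOn_exp.2 (Set.mem_univ (0:ℝ)) (Set.mem_univ (-Real.log 2))
      (by linarith : (0:ℝ) ≤ 1 - 2*v) (by linarith : (0:ℝ) ≤ 2*v) (by ring)
    simp only [smul_eq_mul, mul_zero, zero_add, Real.exp_zero] at hconv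
    have h2 : Real.exp (-Real.log 2) = 1/2 := by
      rw [Real.exp_neg, Real.exp_log (by norm_num : (0:ℝ) < 2)]; norm_num
    have hlog4 : Real.log 4 = 2 * Real.log 2 := by
      rw [show (4:ℝ) = 2^2 by norm_num, Real.log_pow]; push_cast; ring
    rw [h2] at hconv
    have heq : -(Real.log 4) * v = 2*v * (-Real.log 2) := by rw [hlog4]; ring
    rw [heq]
    nlinarith [hconv]
  have hshift : ∀ (j : ℕ) (y : ℕ → A) (i : ℕ), shift^[j] y i = y (i + j) := by
    intro j
    induction j with
    | zero => simp
    | succ k ih =>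
      intro y i
      rw [Function.iterate_succ_apply, ih (shift y) i]
      simp only [shift]
      ring_nf
  have hcylmeas : MeasurableSet (cylinder w) := by
    have hc : cylinder w = ⋂ i : Fin n, (fun x : ℕ → A => x i.val) ⁻¹' {w i} := by
      ext x; simp [GibbsEntropy.cylinder]
    rw [hc]
    exact MeasurableSet.iInter fun i => (measurable_pi_apply _) (measurableSet_singleton _)
  have hptop : μ (cylinder w) ≠ ∞ := measure_ne_top μ _
  have hp_pos : 0 < μ (cylinder w) := by
    rcases Nat.eq_zero_or_pos n with hn | hn
    · subst hn
      have hc : cylinder w = Set.univ := by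
        ext x; simp only [GibbsEntropy.cylinder, Set.mem_setOf_eq, Set.mem_univ, iff_true]
        exact fun i => absurd i.isLt (by omega)
      rw [hc]; simp
    · have : Nonempty A := Fintype.card_pos_iff.mp (by omega)
      obtain ⟨C, hC, hG⟩ := hGibbs
      set x : ℕ → A := fun i => if h : i < n then w ⟨i, h⟩ else Classical.arbitrary A with hx
      have hxw : ∀ i : Fin n, x i.val = w i := fun i => dif_pos i.isLt
      have hcyl : GibbsEntropy.cylinder (fun i : Fin n => x i.val) = GibbsEntropy.cylinder w := by
        ext z
        simp only [GibbsEntropy.cylinder, Set.mem_setOf_eq]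
        exact ⟨fun h i => (h i).trans (hxw i), fun h i => (h i).trans (hxw i).symm⟩
      have hg := (hG x n hn).1
      rw [hcyl] at hg
      have hCpos : (0:ℝ) < C⁻¹ := inv_pos.mpr (by linarith)
      have hpos : 0 < (μ (cylinder w)).toReal :=
        lt_of_lt_of_le (by positivity) hg
      exact (ENNReal.toReal_pos_iff.mp hpos).1
  set pr : ℝ := (μ (cylinder w)).toReal with hprdef
  have hpr : 0 < pr := ENNReal.toReal_pos hp_pos.ne' hptop
  set m : ℕ := ⌈v / pr⌉₊ with hmdef
  have hsub : {y | wordHitTime w y * μ (cylinder w) < ENNReal.ofReal v} ⊆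
      ⋃ j ∈ Finset.Ico 1 m, (shift^[j]) ⁻¹' cylinder w := by
    intro y hy
    simp only [Set.mem_setOf_eq] at hy
    have hlt : wordHitTime w y < ENNReal.ofReal v / μ (cylinder w) :=
      (ENNReal.lt_div_iff_mul_lt (Or.inl hp_pos.ne') (Or.inl hptop)).mpr hy
    rw [wordHitTime, iInf_lt_iff] at hlt
    obtain ⟨j, hj⟩ := hlt
    rw [iInf_lt_iff] at hj
    obtain ⟨⟨hj1, hjm⟩, hjlt⟩ := hj
    have hjp : (j:ℝ≥0∞) * μ (cylinder w) < ENNReal.ofReal v :=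
      (ENNReal.lt_div_iff_mul_lt (Or.inl hp_pos.ne') (Or.inl hptop)).mp hjlt
    have hjr : (j:ℝ) * pr < v := by
      have hfin : (j:ℝ≥0∞) * μ (cylinder w) ≠ ∞ :=
        ENNReal.mul_ne_top (ENNReal.natCast_ne_top j) hptop
      have := (ENNReal.lt_ofReal_iff_toReal_lt hfin).mp hjp
      rwa [ENNReal.toReal_mul, ENNReal.toReal_natCast] at this
    have hjm' : j < m := by
      apply Nat.lt_ceil.mpr
      rw [lt_div_iff₀ hpr]
      exact hjr
    refine Set.mem_biUnion (Finset.mem_Ico.mpr ⟨hj1, hjm'⟩) ?_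
    intro i
    rw [hshift j y i.val, Nat.add_comm]
    exact hjm i
  have hmain : μ {y | wordHitTime w y * μ (cylinder w) < ENNReal.ofReal v} ≤
      ENNReal.ofReal v := by
    calc μ {y | wordHitTime w y * μ (cylinder w) < ENNReal.ofReal v}
        ≤ μ (⋃ j ∈ Finset.Ico 1 m, (shift^[j]) ⁻¹' cylinder w) := measure_mono hsub
      _ ≤ ∑ j ∈ Finset.Ico 1 m, μ ((shift^[j]) ⁻¹' cylinder w) :=
          measure_biUnion_finset_le _ _
      _ = ∑ j ∈ Finset.Ico 1 m, μ (cylinder w) :=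
          Finset.sum_congr rfl fun j _ =>
            (hσ.iterate j).measure_preimage hcylmeas.nullMeasurableSet
      _ = ((m - 1 : ℕ) : ℝ≥0∞) * μ (cylinder w) := by
          rw [Finset.sum_const, Nat.card_Ico, nsmul_eq_mul]
      _ ≤ ENNReal.ofReal v := by
          have hle : ((m - 1 : ℕ) : ℝ) * pr ≤ v := by
            rcases Nat.eq_zero_or_pos m with hm | hm
            · simp [hm]; positivity
            · have h1 : ((m - 1 : ℕ) : ℝ) < v / pr := Nat.lt_ceil.mp (by omega)
              have := (lt_div_iff₀ hpr).mp h1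
              linarith
          have hp' : μ (cylinder w) = ENNReal.ofReal pr :=
            (ENNReal.ofReal_toReal hptop).symm
          rw [hp', ← ENNReal.ofReal_natCast, ← ENNReal.ofReal_mul (by positivity)]
          exact ENNReal.ofReal_le_ofReal hle
  constructor
  · exact hmain.trans (ENNReal.ofReal_le_ofReal hexp)
  · have := Real.add_one_le_exp (-(Real.log 4) * v)
    linarith
end
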